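/- arXiv:0901.4914 — 4 statements merged into one kernel-verified Lean document; each statement's English description precedes it below -/
import Mathlib

section
/- Let η and η' be integrable random vectors in ℝ^n defined on (possibly different) probability spaces. If E((⟨u,η⟩ + u₀)₊) = E((⟨u,η'⟩ + u₀)₊) for every u₀ ∈ ℝ and every u ∈ ℝ^n, then η and η' have the same distribution. -/
open MeasureTheory

open MeasureTheory Set Filter Topology

lemma integrable_callpay {μ : Measure ℝ} [IsFiniteMeasure μ] (hμ : Integrable (fun x : ℝ => x) μ) (c : ℝ) :
    Integrable (fun x => max (x + c) 0) μ :=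
  (hμ.add (integrable_const c)).pos_part

lemma law_eq_of_call (μ ν : Measure ℝ) [IsProbabilityMeasure μ] [IsProbabilityMeasure ν]
    (hμ : Integrable (fun x : ℝ => x) μ) (hν : Integrable (fun x : ℝ => x) ν)
    (h : ∀ c : ℝ, ∫ x, max (x + c) 0 ∂μ = ∫ x, max (x + c) 0 ∂ν) : μ = ν := by
  apply Measure.ext_of_Ici
  intro a
  set g : ℕ → ℝ → ℝ := fun k x =>
    ((k : ℝ) + 1) * (max (x + (1 / ((k : ℝ) + 1) - a)) 0 - max (x + (-a)) 0) with hg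
  have hgbound : ∀ k x, ‖g k x‖ ≤ 1 := by
    intro k x
    have hk : (0:ℝ) < (k : ℝ) + 1 := by positivity
    have hδ : (0:ℝ) < 1 / ((k : ℝ) + 1) := by positivity
    have h1 : max (x + (-a)) 0 ≤ max (x + (1 / ((k : ℝ) + 1) - a)) 0 := by
      apply max_le_max _ le_rfl; linarith
    have h2 : max (x + (1 / ((k : ℝ) + 1) - a)) 0 ≤ max (x + (-a)) 0 + 1 / ((k : ℝ) + 1) := by
      apply max_le
      · have := le_max_left (x + (-a)) 0; linarith
      · have := le_max_right (x + (-a)) 0; linarith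
    have hmul : ((k:ℝ)+1) * (1 / ((k : ℝ) + 1)) = 1 := by field_simp
    have low : 0 ≤ ((k:ℝ)+1) * (max (x + (1 / ((k : ℝ) + 1) - a)) 0 - max (x + (-a)) 0) :=
      mul_nonneg hk.le (by linarith)
    have upp : ((k:ℝ)+1) * (max (x + (1 / ((k : ℝ) + 1) - a)) 0 - max (x + (-a)) 0) ≤ 1 := by
      calc ((k:ℝ)+1) * (max (x + (1 / ((k : ℝ) + 1) - a)) 0 - max (x + (-a)) 0)
          ≤ ((k:ℝ)+1) * (1 / ((k : ℝ) + 1)) :=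
            mul_le_mul_of_nonneg_left (by linarith) hk.le
        _ = 1 := hmul
    simp only [hg, Real.norm_eq_abs, abs_le]
    exact ⟨by linarith, upp⟩
  have hglim : ∀ x, Tendsto (fun k => g k x) atTop (𝓝 ((Ici a).indicator (fun _ => (1:ℝ)) x)) := by
    intro x
    rcases le_or_gt a x with hax | hax
    · have : ∀ k : ℕ, g k x = 1 := by
        intro k
        have hk : (0:ℝ) < (k : ℝ) + 1 := by positivity
        have hδ : (0:ℝ) < 1 / ((k : ℝ) + 1) := by positivity
        have e1 : max (x + (1 / ((k : ℝ) + 1) - a)) 0 = x + (1 / ((k : ℝ) + 1) - a) := by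
          apply max_eq_left; linarith
        have e2 : max (x + (-a)) 0 = x + (-a) := by apply max_eq_left; linarith
        rw [hg]; simp only [e1, e2]; field_simp; ring
      rw [indicator_of_mem (by exact hax)]
      simp only [this]; exact tendsto_const_nhds
    · rw [indicator_of_notMem (by simpa using hax.not_ge)]
      have : ∀ᶠ k : ℕ in atTop, g k x = 0 := by
        have hpos : 0 < a - x := by linarith
        have : ∀ᶠ k : ℕ in atTop, 1 / ((k : ℝ) + 1) < a - x := by
          have := tendsto_one_div_add_atTop_nhds_zero_nat (𝕜 := ℝ)
          exact this.eventually (eventually_lt_nhds hpos)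
        filter_upwards [this] with k hk
        have e1 : max (x + (1 / ((k : ℝ) + 1) - a)) 0 = 0 := by
          apply max_eq_right; linarith
        have e2 : max (x + (-a)) 0 = 0 := by
          have hδ : (0:ℝ) < 1 / ((k : ℝ) + 1) := by positivity
          apply max_eq_right; linarith
        rw [hg]; simp only [e1, e2]; ring
      exact Tendsto.congr' (this.mono fun k hk => hk.symm) tendsto_const_nhds
  have hmeas : ∀ (ξ : Measure ℝ) (k : ℕ), AEStronglyMeasurable (g k) ξ := by
    intro ξ k
    apply Continuous.aestronglyMeasurable
    continuity
  have key : ∀ (ξ : Measure ℝ), IsProbabilityMeasure ξ → Integrable (fun x : ℝ => x) ξ →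
      Tendsto (fun k => ∫ x, g k x ∂ξ) atTop (𝓝 ((ξ (Ici a)).toReal)) := by
    intro ξ hprob hint
    have := hprob
    have h1 : Tendsto (fun k => ∫ x, g k x ∂ξ) atTop
        (𝓝 (∫ x, (Ici a).indicator (fun _ => (1:ℝ)) x ∂ξ)) := by
      apply tendsto_integral_of_dominated_convergence (fun _ => (1:ℝ)) (hmeas ξ)
        (integrable_const 1)
      · intro k; exact Eventually.of_forall (fun x => hgbound k x)
      · exact Eventually.of_forall hglim
    have h2 : ∫ x, (Ici a).indicator (fun _ => (1:ℝ)) x ∂ξ = (ξ (Ici a)).toReal := by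
      rw [integral_indicator measurableSet_Ici]
      simp
      rfl
    rwa [h2] at h1
  have heq : ∀ k, ∫ x, g k x ∂μ = ∫ x, g k x ∂ν := by
    intro k
    have expand : ∀ (ξ : Measure ℝ), IsFiniteMeasure ξ → Integrable (fun x : ℝ => x) ξ →
        ∫ x, g k x ∂ξ = ((k : ℝ) + 1) *
          ((∫ x, max (x + (1 / ((k : ℝ) + 1) - a)) 0 ∂ξ) - ∫ x, max (x + (-a)) 0 ∂ξ) := by
      intro ξ hfin hint
      rw [hg]
      simp only
      rw [integral_const_mul, integral_sub (integrable_callpay hint _) (integrable_callpay hint _)]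
    rw [expand μ inferInstance hμ, expand ν inferInstance hν, h, h]
  have hμl := key μ ‹_› hμ
  have hνl := key ν ‹_› hν
  rw [funext heq] at hμl
  have := tendsto_nhds_unique hμl hνl
  exact (ENNReal.toReal_eq_toReal_iff' (measure_ne_top μ _) (measure_ne_top ν _)).mp this
open scoped ENNReal NNReal

noncomputable section CW

variable {n : ℕ}

/-- character on the torus -/
def CWchar (k : Fin n → ℤ) : (Fin n → Circle) → ℂ :=
  fun z => ((∏ i, z i ^ k i : Circle) : ℂ)

lemma CWchar_continuous (k : Fin n → ℤ) : Continuous (CWchar k) := by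
  apply continuous_subtype_val.comp
  exact (continuous_finset_prod _ fun i _ => (continuous_apply i).zpow _ : Continuous fun z : Fin n → Circle => ∏ i, z i ^ k i)

lemma CWchar_mul (k l : Fin n → ℤ) (z : Fin n → Circle) :
    CWchar k z * CWchar l z = CWchar (k + l) z := by
  unfold CWchar
  rw [← Circle.coe_mul, ← Finset.prod_mul_distrib]
  congr 1
  congr 1
  ext i
  simp [zpow_add]

lemma CWchar_conj (k : Fin n → ℤ) (z : Fin n → Circle) :
    (starRingEnd ℂ) (CWchar k z) = CWchar (-k) z := by
  unfold CWchar
  rw [← Circle.coe_inv_eq_conj]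
  congr 1
  rw [← Finset.prod_inv_distrib]
  congr 1
  ext i
  simp [zpow_neg]

/-- real part generator -/
def CWcos (k : Fin n → ℤ) : C(Fin n → Circle, ℝ) :=
  ⟨fun z => (CWchar k z).re, Complex.continuous_re.comp (CWchar_continuous k)⟩

def CWsin (k : Fin n → ℤ) : C(Fin n → Circle, ℝ) :=
  ⟨fun z => (CWchar k z).im, Complex.continuous_im.comp (CWchar_continuous k)⟩

def CWgen (n : ℕ) : Set C(Fin n → Circle, ℝ) := Set.range CWcos ∪ Set.range CWsin

def CWspan (n : ℕ) : Submodule ℝ C(Fin n → Circle, ℝ) := Submodule.span ℝ (CWgen n)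

lemma CWchar_zero (z : Fin n → Circle) : CWchar 0 z = 1 := by
  unfold CWchar; simp

lemma CWone_mem : (1 : C(Fin n → Circle, ℝ)) ∈ CWspan n := by
  have : (1 : C(Fin n → Circle, ℝ)) = CWcos 0 := by
    ext z; simp [CWcos, CWchar_zero]
  rw [this]
  exact Submodule.subset_span (Or.inl ⟨0, rfl⟩)

lemma CWcos_mem (k : Fin n → ℤ) : CWcos k ∈ CWspan n :=
  Submodule.subset_span (Or.inl ⟨k, rfl⟩)

lemma CWsin_mem (k : Fin n → ℤ) : CWsin k ∈ CWspan n :=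
  Submodule.subset_span (Or.inr ⟨k, rfl⟩)

lemma CW_gen_mul_gen (f g : C(Fin n → Circle, ℝ)) (hf : f ∈ CWgen n) (hg : g ∈ CWgen n) :
    f * g ∈ CWspan n := by
  have key : ∀ (k l : Fin n → ℤ) (z : Fin n → Circle),
      (CWchar k z * CWchar l z = CWchar (k + l) z) ∧
      (CWchar k z * (starRingEnd ℂ) (CWchar l z) = CWchar (k - l) z) := by
    intro k l z
    refine ⟨CWchar_mul k l z, ?_⟩
    rw [CWchar_conj, CWchar_mul, sub_eq_add_neg]
  rcases hf with ⟨k, rfl⟩ | ⟨k, rfl⟩ <;> rcases hg with ⟨l, rfl⟩ | ⟨l, rfl⟩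
  · have : CWcos k * CWcos l = (2⁻¹ : ℝ) • (CWcos (k + l) + CWcos (k - l)) := by
      ext z
      have h1 := (key k l z).1
      have h2 := (key k l z).2
      simp only [ContinuousMap.mul_apply, ContinuousMap.smul_apply, ContinuousMap.add_apply,
        CWcos, ContinuousMap.coe_mk, smul_eq_mul]
      rw [← h1, ← h2]
      simp [Complex.mul_re, Complex.conj_re, Complex.conj_im]
      ring
    rw [this]
    exact Submodule.smul_mem _ _ (Submodule.add_mem _ (CWcos_mem _) (CWcos_mem _))
  · have : CWcos k * CWsin l = (2⁻¹ : ℝ) • (CWsin (k + l) - CWsin (k - l)) := by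
      ext z
      have h1 := (key k l z).1
      have h2 := (key k l z).2
      simp only [ContinuousMap.mul_apply, ContinuousMap.smul_apply, ContinuousMap.sub_apply,
        CWcos, CWsin, ContinuousMap.coe_mk, smul_eq_mul]
      rw [← h1, ← h2]
      simp [Complex.mul_im, Complex.conj_re, Complex.conj_im]
      ring
    rw [this]
    exact Submodule.smul_mem _ _ (Submodule.sub_mem _ (CWsin_mem _) (CWsin_mem _))
  · have : CWsin k * CWcos l = (2⁻¹ : ℝ) • (CWsin (k + l) + CWsin (k - l)) := by
      ext z
      have h1 := (key k l z).1
      have h2 := (key k l z).2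
      simp only [ContinuousMap.mul_apply, ContinuousMap.smul_apply, ContinuousMap.add_apply,
        CWcos, CWsin, ContinuousMap.coe_mk, smul_eq_mul]
      rw [← h1, ← h2]
      simp [Complex.mul_im, Complex.conj_re, Complex.conj_im]
      ring
    rw [this]
    exact Submodule.smul_mem _ _ (Submodule.add_mem _ (CWsin_mem _) (CWsin_mem _))
  · have : CWsin k * CWsin l = (2⁻¹ : ℝ) • (CWcos (k - l) - CWcos (k + l)) := by
      ext z
      have h1 := (key k l z).1
      have h2 := (key k l z).2
      simp only [ContinuousMap.mul_apply, ContinuousMap.smul_apply, ContinuousMap.sub_apply,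
        CWcos, CWsin, ContinuousMap.coe_mk, smul_eq_mul]
      rw [← h1, ← h2]
      simp [Complex.mul_re, Complex.conj_re, Complex.conj_im]
      ring
    rw [this]
    exact Submodule.smul_mem _ _ (Submodule.sub_mem _ (CWcos_mem _) (CWcos_mem _))

lemma CW_mul_mem (f g : C(Fin n → Circle, ℝ)) (hf : f ∈ CWspan n) (hg : g ∈ CWspan n) :
    f * g ∈ CWspan n := by
  induction hf using Submodule.span_induction with
  | mem x hx =>
    induction hg using Submodule.span_induction with
    | mem y hy => exact CW_gen_mul_gen _ _ hx hy
    | zero => simpa using Submodule.zero_mem (CWspan n)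
    | add y z hy hz hy' hz' => rw [mul_add]; exact Submodule.add_mem _ hy' hz'
    | smul a y hy hy' => rw [mul_smul_comm]; exact Submodule.smul_mem _ _ hy'
  | zero => simpa using Submodule.zero_mem (CWspan n)
  | add x y hx hy hx' hy' => rw [add_mul]; exact Submodule.add_mem _ hx' hy'
  | smul a x hx hx' => rw [smul_mul_assoc]; exact Submodule.smul_mem _ _ hx'

def CWalg (n : ℕ) : Subalgebra ℝ C(Fin n → Circle, ℝ) :=
  (CWspan n).toSubalgebra CWone_mem CW_mul_mem

lemma CWchar_single (i : Fin n) (z : Fin n → Circle) :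
    CWchar (Pi.single i 1) z = (z i : ℂ) := by
  unfold CWchar
  congr 1
  rw [Finset.prod_eq_single i]
  · simp
    rfl
  · intro b _ hb; simp [Pi.single_eq_of_ne hb]
  · intro hi; exact absurd (Finset.mem_univ i) hi

lemma CWalg_separates : (CWalg n).SeparatesPoints := by
  intro x y hxy
  have : ∃ i, x i ≠ y i := by
    by_contra hc
    push_neg at hc
    exact hxy (funext hc)
  obtain ⟨i, hi⟩ := this
  have hC : (x i : ℂ) ≠ (y i : ℂ) := fun hc => hi (Subtype.ext hc)
  rcases (by
    by_contra hc
    push_neg at hc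
    exact hC (Complex.ext hc.1 hc.2) : (x i : ℂ).re ≠ (y i : ℂ).re ∨ (x i : ℂ).im ≠ (y i : ℂ).im) with hre | him
  · refine ⟨_, ⟨CWcos (Pi.single i 1), CWcos_mem _, rfl⟩, ?_⟩
    simpa [CWcos, CWchar_single] using hre
  · refine ⟨_, ⟨CWsin (Pi.single i 1), CWsin_mem _, rfl⟩, ?_⟩
    simpa [CWsin, CWchar_single] using him

lemma CWchar_exp (k : Fin n → ℤ) (θ : Fin n → ℝ) :
    CWchar k (fun i => Circle.exp (θ i)) =
      Complex.exp ((↑(∑ i, (k i : ℝ) * θ i) : ℂ) * Complex.I) := by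
  unfold CWchar
  simp only
  rw [show ((↑(∏ i, Circle.exp (θ i) ^ k i) : ℂ)) = Circle.coeHom (∏ i, Circle.exp (θ i) ^ k i) from rfl,
    map_prod Circle.coeHom]
  have : ∀ i : Fin n, Circle.coeHom (Circle.exp (θ i) ^ k i)
      = Complex.exp ((k i : ℂ) * ((θ i : ℂ) * Complex.I)) := by
    intro i
    rw [map_zpow' Circle.coeHom Circle.coe_inv]
    show ((Circle.exp (θ i) : ℂ)) ^ (k i) = _
    rw [Circle.coe_exp, ← Complex.exp_int_mul]
  simp only [this]
  rw [← Complex.exp_sum]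
  congr 1
  push_cast
  rw [Finset.sum_mul]
  congr 1
  ext i
  ring

end CW

open Real in
lemma cramer_wold {n : ℕ} (μ ν : Measure (Fin n → ℝ))
    [IsProbabilityMeasure μ] [IsProbabilityMeasure ν]
    (h1 : ∀ u : Fin n → ℝ, Measure.map (fun x => ∑ l, u l * x l) μ
        = Measure.map (fun x => ∑ l, u l * x l) ν) : μ = ν := by
  have hℓc : ∀ u : Fin n → ℝ, Continuous (fun x : Fin n → ℝ => ∑ l, u l * x l) :=
    fun u => continuous_finset_sum _ fun l _ => continuous_const.mul (continuous_apply l)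
  have htrig : ∀ (g : ℝ → ℝ), Continuous g → ∀ u : Fin n → ℝ,
      ∫ x, g (∑ l, u l * x l) ∂μ = ∫ x, g (∑ l, u l * x l) ∂ν := by
    intro g hg u
    rw [← integral_map (hℓc u).measurable.aemeasurable hg.aestronglyMeasurable,
      ← integral_map (hℓc u).measurable.aemeasurable hg.aestronglyMeasurable, h1 u]
  -- main claim for real bounded continuous functions
  have claim : ∀ g : BoundedContinuousFunction (Fin n → ℝ) ℝ, ∫ x, g x ∂μ = ∫ x, g x ∂ν := by
    intro g
    have core : ∀ ε : ℝ, 0 < ε →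
        |(∫ x, g x ∂μ) - ∫ x, g x ∂ν| ≤ (4 * ‖g‖ + 2) * ε := by
      intro ε hε
      -- tightness
      have htight : ∀ (ξ : Measure (Fin n → ℝ)), IsProbabilityMeasure ξ →
          Tendsto (fun m : ℕ => ξ (Metric.closedBall (0 : Fin n → ℝ) m)ᶜ) atTop (𝓝 0) := by
        intro ξ hξ
        have h2 := tendsto_measure_iInter_atTop (μ := ξ)
          (s := fun m : ℕ => (Metric.closedBall (0 : Fin n → ℝ) m)ᶜ)
          (fun m => measurableSet_closedBall.compl.nullMeasurableSet)
          (fun i j hij => compl_subset_compl.mpr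
            (Metric.closedBall_subset_closedBall (by exact_mod_cast hij)))
          ⟨0, measure_ne_top ξ _⟩
        have h3 : ⋂ m : ℕ, (Metric.closedBall (0 : Fin n → ℝ) m)ᶜ = ∅ := by
          rw [← Set.compl_iUnion, Metric.iUnion_closedBall_nat, Set.compl_univ]
        rwa [h3, measure_empty] at h2
      have hev : ∀ᶠ m : ℕ in atTop,
          μ (Metric.closedBall (0 : Fin n → ℝ) m)ᶜ < ENNReal.ofReal ε ∧
          ν (Metric.closedBall (0 : Fin n → ℝ) m)ᶜ < ENNReal.ofReal ε := by
        have hpos : (0 : ENNReal) < ENNReal.ofReal ε := ENNReal.ofReal_pos.mpr hε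
        exact ((htight μ ‹_›).eventually_lt_const hpos).and
          ((htight ν ‹_›).eventually_lt_const hpos)
      obtain ⟨m, hmμ, hmν⟩ := hev.exists
      set K : Set (Fin n → ℝ) := Metric.closedBall 0 m with hK
      have hKmeas : MeasurableSet K := measurableSet_closedBall
      set c : ℝ := Real.pi / (2 * ((m : ℝ) + 1)) with hc
      have hcpos : 0 < c := by rw [hc]; positivity
      set Pm : (Fin n → ℝ) → (Fin n → Circle) := fun x i => Circle.exp (c * x i) with hPm
      have hPmcont : Continuous Pm := by
        apply continuous_pi
        intro i
        exact Circle.exp.continuous.comp (continuous_const.mul (continuous_apply i))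
      set sr : Circle → ℝ := fun z => Real.arcsin ((z : ℂ).im) / c with hsr
      have hsrcont : Continuous sr := by
        apply Continuous.div_const
        exact Real.continuous_arcsin.comp (Complex.continuous_im.comp continuous_subtype_val)
      have hret : ∀ t : ℝ, |t| ≤ (m : ℝ) → sr (Circle.exp (c * t)) = t := by
        intro t ht
        have hm1 : (0:ℝ) < 2 * ((m : ℝ) + 1) := by positivity
        have hb : |c * t| ≤ Real.pi / 2 := by
          rw [abs_mul, abs_of_pos hcpos]
          have h2 : c * |t| ≤ c * m := mul_le_mul_of_nonneg_left ht hcpos.le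
          have h3 : c * (m:ℝ) ≤ Real.pi / 2 := by
            rw [hc, div_mul_eq_mul_div, div_le_div_iff₀ hm1 (by norm_num : (0:ℝ) < 2)]
            nlinarith [Real.pi_pos]
          linarith
        have habs := abs_le.mp hb
        rw [hsr]
        simp only
        rw [Circle.coe_exp, Complex.exp_ofReal_mul_I_im,
          Real.arcsin_sin (by linarith [habs.1]) (by linarith [habs.2]),
          mul_div_cancel_left₀ _ hcpos.ne']
      set gbar : C(Fin n → Circle, ℝ) := ⟨fun z => g (fun i => sr (z i)),
        g.continuous.comp (continuous_pi fun i => hsrcont.comp (continuous_apply i))⟩ with hgbar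
      have hgbar_bd : ∀ z, ‖gbar z‖ ≤ ‖g‖ := fun z => g.norm_coe_le_norm _
      have hgbarK : ∀ x ∈ K, gbar (Pm x) = g x := by
        intro x hx
        have hxi : ∀ i, |x i| ≤ (m : ℝ) := by
          intro i
          have h1 := norm_le_pi_norm x i
          have h2 : ‖x‖ ≤ (m : ℝ) := by
            rw [hK] at hx
            simpa [Metric.mem_closedBall, dist_zero_right] using hx
          calc |x i| = ‖x i‖ := rfl
            _ ≤ ‖x‖ := h1
            _ ≤ (m : ℝ) := h2
        simp only [hgbar, ContinuousMap.coe_mk, hPm]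
        congr 1
        funext i
        exact hret (x i) (hxi i)
      obtain ⟨p, hp⟩ := ContinuousMap.exists_mem_subalgebra_near_continuousMap_of_separatesPoints
        (CWalg n) CWalg_separates gbar ε hε
      have hint : ∀ (q : C(Fin n → Circle, ℝ)) (ξ : Measure (Fin n → ℝ)), IsProbabilityMeasure ξ →
          Integrable (fun x => q (Pm x)) ξ := by
        intro q ξ hξ
        apply (integrable_const ‖q‖).mono'
        · exact (q.continuous.comp hPmcont).aestronglyMeasurable
        · exact Eventually.of_forall fun x => q.norm_coe_le_norm _
      have hQ : ∀ q, q ∈ CWspan n → ∫ x, q (Pm x) ∂μ = ∫ x, q (Pm x) ∂ν := by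
        intro q hq
        induction hq using Submodule.span_induction with
        | mem q hq =>
          have hccos : ∀ (k : Fin n → ℤ) (x : Fin n → ℝ),
              CWchar k (Pm x) = Complex.exp ((↑(∑ l, (c * (k l : ℝ)) * x l) : ℂ) * Complex.I) := by
            intro k x
            have hPx : Pm x = fun i => Circle.exp (c * x i) := rfl
            have hsum : (∑ i, (k i : ℝ) * (c * x i)) = ∑ l, (c * (k l : ℝ)) * x l := by
              apply Finset.sum_congr rfl
              intro l _
              ring
            rw [hPx, CWchar_exp, hsum]
          rcases hq with ⟨k, rfl⟩ | ⟨k, rfl⟩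
          · have hcalc : ∀ x : Fin n → ℝ,
                (CWcos k) (Pm x) = Real.cos (∑ l, (c * (k l : ℝ)) * x l) := by
              intro x
              simp only [CWcos, ContinuousMap.coe_mk]
              rw [hccos k x, Complex.exp_ofReal_mul_I_re]
            simp_rw [hcalc]
            exact htrig Real.cos Real.continuous_cos (fun l => c * (k l : ℝ))
          · have hcalc : ∀ x : Fin n → ℝ,
                (CWsin k) (Pm x) = Real.sin (∑ l, (c * (k l : ℝ)) * x l) := by
              intro x
              simp only [CWsin, ContinuousMap.coe_mk]
              rw [hccos k x, Complex.exp_ofReal_mul_I_im]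
            simp_rw [hcalc]
            exact htrig Real.sin Real.continuous_sin (fun l => c * (k l : ℝ))
        | zero => simp
        | add q r hq hr hq' hr' =>
          simp only [ContinuousMap.add_apply]
          rw [integral_add (hint q μ ‹_›) (hint r μ ‹_›),
            integral_add (hint q ν ‹_›) (hint r ν ‹_›), hq', hr']
        | smul a q hq hq' =>
          simp only [ContinuousMap.smul_apply, smul_eq_mul]
          rw [integral_const_mul, integral_const_mul, hq']
      have hQp : ∫ x, (p : C(Fin n → Circle, ℝ)) (Pm x) ∂μ
          = ∫ x, (p : C(Fin n → Circle, ℝ)) (Pm x) ∂ν := hQ _ p.2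
      have est : ∀ (ξ : Measure (Fin n → ℝ)), IsProbabilityMeasure ξ →
          ξ Kᶜ < ENNReal.ofReal ε →
          |(∫ x, g x ∂ξ) - ∫ x, (p : C(Fin n → Circle, ℝ)) (Pm x) ∂ξ| ≤ 2 * ‖g‖ * ε + ε := by
        intro ξ hξ hKc
        have hgint : Integrable (fun x => g x) ξ := g.integrable ξ
        have hgbarint := hint gbar ξ hξ
        have hpint := hint (p : C(Fin n → Circle, ℝ)) ξ hξ
        have split : (∫ x, g x ∂ξ) - ∫ x, (p : C(Fin n → Circle, ℝ)) (Pm x) ∂ξ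
            = (∫ x, (g x - gbar (Pm x)) ∂ξ)
              + ∫ x, (gbar (Pm x) - (p : C(Fin n → Circle, ℝ)) (Pm x)) ∂ξ := by
          rw [integral_sub hgint hgbarint, integral_sub hgbarint hpint]
          ring
        have t1 : |∫ x, (g x - gbar (Pm x)) ∂ξ| ≤ 2 * ‖g‖ * ε := by
          have hze : ∫ x in K, (g x - gbar (Pm x)) ∂ξ = 0 :=
            setIntegral_eq_zero_of_forall_eq_zero fun x hx => by rw [hgbarK x hx]; ring
          have hsplit : ∫ x, (g x - gbar (Pm x)) ∂ξ = ∫ x in Kᶜ, (g x - gbar (Pm x)) ∂ξ := by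
            rw [← integral_add_compl (f := fun x => g x - gbar (Pm x)) hKmeas (hgint.sub hgbarint), hze, zero_add]
          rw [hsplit, ← Real.norm_eq_abs]
          calc ‖∫ x in Kᶜ, (g x - gbar (Pm x)) ∂ξ‖
              ≤ (2 * ‖g‖) * (ξ Kᶜ).toReal := by
                apply norm_setIntegral_le_of_norm_le_const (measure_lt_top ξ _)
                intro x hx
                calc ‖g x - gbar (Pm x)‖ ≤ ‖g x‖ + ‖gbar (Pm x)‖ := norm_sub_le _ _
                  _ ≤ ‖g‖ + ‖g‖ := add_le_add (g.norm_coe_le_norm x) (hgbar_bd _)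
                  _ = 2 * ‖g‖ := by ring
            _ ≤ (2 * ‖g‖) * ε := by
                apply mul_le_mul_of_nonneg_left _ (by positivity)
                exact ENNReal.toReal_le_of_le_ofReal hε.le hKc.le
        have t2 : |∫ x, (gbar (Pm x) - (p : C(Fin n → Circle, ℝ)) (Pm x)) ∂ξ| ≤ ε := by
          rw [← Real.norm_eq_abs]
          have hb : ∀ x, ‖gbar (Pm x) - (p : C(Fin n → Circle, ℝ)) (Pm x)‖
              ≤ ‖(p : C(Fin n → Circle, ℝ)) - gbar‖ := by
            intro x
            have h5 := ContinuousMap.norm_coe_le_norm ((p : C(Fin n → Circle, ℝ)) - gbar) (Pm x)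
            rw [ContinuousMap.sub_apply] at h5
            rw [show gbar (Pm x) - (p : C(Fin n → Circle, ℝ)) (Pm x)
              = -((p : C(Fin n → Circle, ℝ)) (Pm x) - gbar (Pm x)) by ring, norm_neg]
            exact h5
          calc ‖∫ x, (gbar (Pm x) - (p : C(Fin n → Circle, ℝ)) (Pm x)) ∂ξ‖
              ≤ ‖(p : C(Fin n → Circle, ℝ)) - gbar‖ * (ξ univ).toReal :=
                norm_integral_le_of_norm_le_const (Eventually.of_forall hb)
            _ ≤ ε := by
                rw [measure_univ, ENNReal.toReal_one, mul_one]
                exact hp.le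
        rw [split]
        calc |(∫ x, (g x - gbar (Pm x)) ∂ξ)
              + ∫ x, (gbar (Pm x) - (p : C(Fin n → Circle, ℝ)) (Pm x)) ∂ξ|
            ≤ |∫ x, (g x - gbar (Pm x)) ∂ξ|
              + |∫ x, (gbar (Pm x) - (p : C(Fin n → Circle, ℝ)) (Pm x)) ∂ξ| := abs_add_le _ _
          _ ≤ 2 * ‖g‖ * ε + ε := add_le_add t1 t2
      have e1 := est μ ‹_› hmμ
      have e2 := est ν ‹_› hmν
      have hrw : (∫ x, g x ∂μ) - ∫ x, g x ∂ν
          = ((∫ x, g x ∂μ) - ∫ x, (p : C(Fin n → Circle, ℝ)) (Pm x) ∂μ)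
            - ((∫ x, g x ∂ν) - ∫ x, (p : C(Fin n → Circle, ℝ)) (Pm x) ∂ν) := by
        rw [hQp]; ring
      rw [hrw]
      calc |((∫ x, g x ∂μ) - ∫ x, (p : C(Fin n → Circle, ℝ)) (Pm x) ∂μ)
            - ((∫ x, g x ∂ν) - ∫ x, (p : C(Fin n → Circle, ℝ)) (Pm x) ∂ν)|
          ≤ |(∫ x, g x ∂μ) - ∫ x, (p : C(Fin n → Circle, ℝ)) (Pm x) ∂μ|
            + |(∫ x, g x ∂ν) - ∫ x, (p : C(Fin n → Circle, ℝ)) (Pm x) ∂ν| := abs_sub _ _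
        _ ≤ (2 * ‖g‖ * ε + ε) + (2 * ‖g‖ * ε + ε) := add_le_add e1 e2
        _ = (4 * ‖g‖ + 2) * ε := by ring
    -- conclude from core
    have habs : |(∫ x, g x ∂μ) - ∫ x, g x ∂ν| ≤ 0 := by
      have hc : (0:ℝ) < 4 * ‖g‖ + 2 := by positivity
      refine le_of_forall_pos_le_add ?_
      intro ε hε
      have := core (ε / (4 * ‖g‖ + 2)) (by positivity)
      rw [mul_div_cancel₀ _ hc.ne'] at this
      linarith
    have := abs_nonneg ((∫ x, g x ∂μ) - ∫ x, g x ∂ν)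
    have h0 : |(∫ x, g x ∂μ) - ∫ x, g x ∂ν| = 0 := le_antisymm habs this
    have := abs_eq_zero.mp h0
    linarith [this]
  -- from claim to measure equality
  apply ext_of_forall_lintegral_eq_of_IsFiniteMeasure
  intro f
  have hfin : ∫⁻ x, (f x : ENNReal) ∂μ ≠ ⊤ := (f.lintegral_lt_top_of_nnreal μ).ne
  have hfin' : ∫⁻ x, (f x : ENNReal) ∂ν ≠ ⊤ := (f.lintegral_lt_top_of_nnreal ν).ne
  rw [← ENNReal.toReal_eq_toReal_iff' hfin hfin',
    BoundedContinuousFunction.toReal_lintegral_coe_eq_integral,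
    BoundedContinuousFunction.toReal_lintegral_coe_eq_integral]
  exact claim (f.comp (fun r : ℝ≥0 => (r : ℝ)) (isometry_subtype_coe.lipschitz))


/-- If two integrable random vectors in ℝⁿ (possibly on different
probability spaces) have the same expected basket payoffs
`E((⟨u,η⟩ + u₀)₊)` for all strikes `u₀ ∈ ℝ` and weights `u ∈ ℝⁿ`, then they have
the same distribution. -/
theorem stmt_0 {n : ℕ} {Ω Ω' : Type*}
    [MeasurableSpace Ω] [MeasurableSpace Ω']
    (P : Measure Ω) (P' : Measure Ω')
    [IsProbabilityMeasure P] [IsProbabilityMeasure P']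
    (η : Ω → Fin n → ℝ) (η' : Ω' → Fin n → ℝ)
    (hη : Integrable η P) (hη' : Integrable η' P')
    (h : ∀ (u₀ : ℝ) (u : Fin n → ℝ),
        ∫ ω, max (∑ l, u l * η ω l + u₀) 0 ∂P
          = ∫ ω, max (∑ l, u l * η' ω l + u₀) 0 ∂P') :
    Measure.map η P = Measure.map η' P' := by
  set μ := Measure.map η P with hμdef
  set ν := Measure.map η' P' with hνdef
  haveI : IsProbabilityMeasure μ := Measure.isProbabilityMeasure_map hη.aemeasurable
  haveI : IsProbabilityMeasure ν := Measure.isProbabilityMeasure_map hη'.aemeasurable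
  have hℓc : ∀ u : Fin n → ℝ, Continuous (fun x : Fin n → ℝ => ∑ l, u l * x l) :=
    fun u => continuous_finset_sum _ fun l _ => continuous_const.mul (continuous_apply l)
  have hidμ : Integrable (fun x : Fin n → ℝ => x) μ := by
    have h0 : Integrable (id : (Fin n → ℝ) → (Fin n → ℝ)) μ := by
      rw [hμdef]
      exact (integrable_map_measure aestronglyMeasurable_id hη.aemeasurable).mpr hη
    exact h0
  have hidν : Integrable (fun x : Fin n → ℝ => x) ν := by
    have h0 : Integrable (id : (Fin n → ℝ) → (Fin n → ℝ)) ν := by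
      rw [hνdef]
      exact (integrable_map_measure aestronglyMeasurable_id hη'.aemeasurable).mpr hη'
    exact h0
  have hℓint : ∀ (ξ : Measure (Fin n → ℝ)), Integrable (fun x : Fin n → ℝ => x) ξ →
      ∀ u : Fin n → ℝ, Integrable (fun x : Fin n → ℝ => ∑ l, u l * x l) ξ := by
    intro ξ hid u
    apply integrable_finset_sum
    intro l _
    exact ((ContinuousLinearMap.proj l : (Fin n → ℝ) →L[ℝ] ℝ).integrable_comp hid).const_mul (u l)
  have hpay : ∀ (u₀ : ℝ) (u : Fin n → ℝ),
      ∫ x, max (∑ l, u l * x l + u₀) 0 ∂μ = ∫ x, max (∑ l, u l * x l + u₀) 0 ∂ν := by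
    intro u₀ u
    have hcont : Continuous (fun x : Fin n → ℝ => max (∑ l, u l * x l + u₀) 0) :=
      ((hℓc u).add continuous_const).max continuous_const
    rw [hμdef, hνdef, integral_map hη.aemeasurable hcont.aestronglyMeasurable,
      integral_map hη'.aemeasurable hcont.aestronglyMeasurable]
    exact h u₀ u
  apply cramer_wold μ ν
  intro u
  haveI : IsProbabilityMeasure (Measure.map (fun x : Fin n → ℝ => ∑ l, u l * x l) μ) :=
    Measure.isProbabilityMeasure_map (hℓc u).measurable.aemeasurable
  haveI : IsProbabilityMeasure (Measure.map (fun x : Fin n → ℝ => ∑ l, u l * x l) ν) :=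
    Measure.isProbabilityMeasure_map (hℓc u).measurable.aemeasurable
  apply law_eq_of_call
  · have h0 : Integrable (id : ℝ → ℝ) (Measure.map (fun x : Fin n → ℝ => ∑ l, u l * x l) μ) :=
      (integrable_map_measure aestronglyMeasurable_id
        (hℓc u).measurable.aemeasurable).mpr (hℓint μ hidμ u)
    exact h0
  · have h0 : Integrable (id : ℝ → ℝ) (Measure.map (fun x : Fin n → ℝ => ∑ l, u l * x l) ν) :=
      (integrable_map_measure aestronglyMeasurable_id
        (hℓc u).measurable.aemeasurable).mpr (hℓint ν hidν u)
    exact h0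
  · intro cc
    have hcont : Continuous (fun t : ℝ => max (t + cc) 0) :=
      (continuous_id.add continuous_const).max continuous_const
    rw [integral_map (hℓc u).measurable.aemeasurable hcont.aestronglyMeasurable,
      integral_map (hℓc u).measurable.aemeasurable hcont.aestronglyMeasurable]
    exact hpay cc u
end

section
/- Let η be an integrable random vector in ℝ^n with a.s. strictly positive coordinates, defined on a probability space (Ω,F,Q), and let i < j in {1,…,n}. Define the probability measure Q^j by dQ^j/dQ = η_j / E(η_j), and let κ̃_j(η) = (η_1/η_j, …, η_{j−1}/η_j, η_{j+1}/η_j, …, η_n/η_j) ∈ ℝ^{n−1}. Then η is ij-swap-invariant under Q if and only if the (n−1)-dimensional random vector κ̃_j(η) is self-dual with respect to its i-th numeraire under Q^j. -/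
open MeasureTheory
open scoped ENNReal NNReal

private def extj {n : ℕ} (j : Fin n) (u₀ : ℝ) (u : {l : Fin n // l ≠ j} → ℝ)
    (l : Fin n) : ℝ :=
  if h : l = j then u₀ else u ⟨l, h⟩

private lemma sum_extj {n : ℕ} (j : Fin n) (u₀ : ℝ) (u : {l : Fin n // l ≠ j} → ℝ)
    (x : Fin n → ℝ) :
    ∑ l, extj j u₀ u l * x l
      = (∑ l : {l : Fin n // l ≠ j}, u l * x l.1) + u₀ * x j := by
  classical
  rw [Finset.sum_eq_sum_sdiff_singleton_add (Finset.mem_univ j)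
      (fun l => extj j u₀ u l * x l)]
  congr 1
  · rw [Finset.sum_subtype (p := fun l => l ≠ j) (Finset.univ \ {j}) (by simp)
      (fun l => extj j u₀ u l * x l)]
    refine Finset.sum_congr rfl fun l _ => ?_
    simp [extj, l.2]
  · simp [extj]

private lemma extj_swap {n : ℕ} (i j : Fin n) (hij : i ≠ j) (u₀ : ℝ)
    (u : {l : Fin n // l ≠ j} → ℝ) :
    (fun l => extj j u₀ u (Equiv.swap i j l))
      = extj j (u ⟨i, hij⟩) (Function.update u ⟨i, hij⟩ u₀) := by
  funext l
  rcases eq_or_ne l i with rfl | hli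
  · simp [Equiv.swap_apply_left, extj, hij]
  rcases eq_or_ne l j with rfl | hlj
  · simp [Equiv.swap_apply_right, extj, hij]
  · have h1 : (⟨l, hlj⟩ : {l : Fin n // l ≠ j}) ≠ ⟨i, hij⟩ := by
      simp [Subtype.ext_iff, hli]
    simp [Equiv.swap_apply_of_ne_of_ne hli hlj, extj, hlj, Function.update_of_ne h1]

/-- For `i < j`, an integrable a.s. positive random vector `η` in
ℝⁿ is `ij`-swap-invariant under `Q` iff the `(n-1)`-dimensional vector
`κ̃_j(η) = (η_l/η_j)_{l ≠ j}` is self-dual with respect to its `i`-th numeraire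
under the measure `Q^j` with density `η_j / E η_j` with respect to `Q`.
Self-duality w.r.t. the `i`-th numeraire means that the expected basket payoff
is unchanged when the strike `u₀` and the `i`-th weight `u_i` are
interchanged. -/
theorem stmt_7 {n : ℕ} {Ω : Type*} [MeasurableSpace Ω]
    (Q : Measure Ω) [IsProbabilityMeasure Q]
    (η : Ω → Fin n → ℝ) (hη : Integrable η Q)
    (hpos : ∀ᵐ ω ∂Q, ∀ l, 0 < η ω l)
    (i j : Fin n) (hij : i < j) :
    (∀ u : Fin n → ℝ,
        ∫ ω, max (∑ l, u l * η ω l) 0 ∂Q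
          = ∫ ω, max (∑ l, u (Equiv.swap i j l) * η ω l) 0 ∂Q)
      ↔
    (∀ (u₀ : ℝ) (u : {l : Fin n // l ≠ j} → ℝ),
        ∫ ω, max ((∑ l : {l : Fin n // l ≠ j}, u l * (η ω l.1 / η ω j)) + u₀) 0
            ∂(Q.withDensity fun ω => ENNReal.ofReal (η ω j / ∫ ω', η ω' j ∂Q))
          = ∫ ω, max ((∑ l : {l : Fin n // l ≠ j},
                  Function.update u ⟨i, hij.ne⟩ u₀ l * (η ω l.1 / η ω j))
                + u ⟨i, hij.ne⟩) 0
            ∂(Q.withDensity fun ω => ENNReal.ofReal (η ω j / ∫ ω', η ω' j ∂Q))) := by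
  classical
  set c : ℝ := ∫ ω', η ω' j ∂Q with hc_def
  have hηj : Integrable (fun ω => η ω j) Q := by
    have := (ContinuousLinearMap.proj (R := ℝ) (φ := fun _ : Fin n => ℝ) j).integrable_comp hη
    simpa using this
  have hposj : ∀ᵐ ω ∂Q, 0 < η ω j := hpos.mono fun ω h => h j
  have hc : 0 < c := by
    rw [hc_def, integral_pos_iff_support_of_nonneg_ae
      (hposj.mono fun ω h => h.le) hηj]
    by_contra h'
    have h0 : Q (Function.support fun ω => η ω j) = 0 := by
      simpa using (not_lt.mp h')
    have hmem : ∀ᵐ ω ∂Q, ω ∈ Function.support fun ω => η ω j :=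
      hposj.mono fun ω h => by simp [Function.support, h.ne']
    have hcompl : Q (Function.support fun ω => η ω j)ᶜ = 0 := by
      rwa [ae_iff] at hmem
    have : (1 : ℝ≥0∞) ≤ 0 := by
      calc (1 : ℝ≥0∞) = Q Set.univ := (measure_univ).symm
        _ ≤ Q (Function.support fun ω => η ω j)
              + Q (Function.support fun ω => η ω j)ᶜ := by
            rw [← Set.union_compl_self (Function.support fun ω => η ω j)]
            exact measure_union_le _ _
        _ = 0 := by rw [h0, hcompl]; simp
    simp at this
  have hmeasd : AEMeasurable (fun ω => (η ω j / c).toNNReal) Q :=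
    (hηj.aemeasurable.div_const c).real_toNNReal
  have key : ∀ (u₀ : ℝ) (u : {l : Fin n // l ≠ j} → ℝ),
      ∫ ω, max ((∑ l : {l : Fin n // l ≠ j}, u l * (η ω l.1 / η ω j)) + u₀) 0
          ∂(Q.withDensity fun ω => ENNReal.ofReal (η ω j / c))
        = c⁻¹ * ∫ ω, max (∑ l, extj j u₀ u l * η ω l) 0 ∂Q := by
    intro u₀ u
    have hd : (fun ω => ENNReal.ofReal (η ω j / c))
        = fun ω => ((η ω j / c).toNNReal : ℝ≥0∞) := rfl
    rw [hd, integral_withDensity_eq_integral_smul₀ hmeasd, ← integral_const_mul]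
    refine integral_congr_ae (hposj.mono fun ω hj => ?_)
    have h1 : ((η ω j / c).toNNReal : ℝ) = η ω j / c :=
      Real.coe_toNNReal _ (by positivity)
    simp only [NNReal.smul_def, smul_eq_mul]
    rw [h1, sum_extj]
    set S := ∑ l : {l : Fin n // l ≠ j}, u l * (η ω l.1 / η ω j) with hS_def
    have hS : S * η ω j = ∑ l : {l : Fin n // l ≠ j}, u l * η ω l.1 := by
      rw [hS_def, Finset.sum_mul]
      exact Finset.sum_congr rfl fun l _ => by field_simp
    have hmain : (η ω j / c) * max (S + u₀) 0
        = max ((S + u₀) * (η ω j / c)) 0 := by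
      rw [mul_comm, max_mul_of_nonneg _ _ (by positivity), zero_mul]
    rw [hmain, mul_comm (c⁻¹) _, max_mul_of_nonneg _ _ (by positivity : (0:ℝ) ≤ c⁻¹),
      zero_mul]
    congr 1
    calc (S + u₀) * (η ω j / c) = (S * η ω j + u₀ * η ω j) * c⁻¹ := by ring
      _ = ((∑ l : {l : Fin n // l ≠ j}, u l * η ω l.1) + u₀ * η ω j) * c⁻¹ := by
          rw [hS]
  constructor
  · intro h u₀ u
    rw [key u₀ u, key (u ⟨i, hij.ne⟩) (Function.update u ⟨i, hij.ne⟩ u₀)]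
    congr 1
    rw [h (extj j u₀ u)]
    have hsw : ∀ l, extj j u₀ u (Equiv.swap i j l)
        = extj j (u ⟨i, hij.ne⟩) (Function.update u ⟨i, hij.ne⟩ u₀) l :=
      fun l => congrFun (extj_swap i j hij.ne u₀ u) l
    simp only [hsw]
  · intro h v
    set u : {l : Fin n // l ≠ j} → ℝ := fun l => v l.1 with hu
    have hv : extj j (v j) u = v := by
      funext l
      by_cases hl : l = j
      · subst hl; simp [extj]
      · simp [extj, hl, hu]
    have := h (v j) u
    rw [key, key] at this
    have h2 := mul_left_cancel₀ (inv_ne_zero hc.ne') this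
    rw [hv] at h2
    rw [h2]
    have hsw : ∀ l, extj j (u ⟨i, hij.ne⟩) (Function.update u ⟨i, hij.ne⟩ (v j)) l
        = v (Equiv.swap i j l) := by
      intro l
      rw [← congrFun (extj_swap i j hij.ne (v j) u) l, hv]
    simp only [hsw]
end

section
/- Let η = (η_1,η_2) be an integrable random vector with a.s. strictly positive coordinates on (Ω,F,Q) with E(η_1) = 1, define Q^1 by dQ^1/dQ = η_1, and set η̃ = η_2/η_1. Then η is 12-swap-invariant under Q (i.e. E_Q((u_1η_1+u_2η_2)₊) = E_Q((u_1η_2+u_2η_1)₊) for all u_1,u_2 ∈ ℝ) if and only if η̃ satisfies the put-call symmetry E_{Q^1}((u_1 η̃ + u_2)₊) = E_{Q^1}((u_1 + u_2 η̃)₊) for all u_1,u_2 ∈ ℝ. -/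
open MeasureTheory

lemma key_eq {Ω : Type*} [MeasurableSpace Ω]
    (Q : Measure Ω) (η₁ η₂ : Ω → ℝ) (h₁ : Integrable η₁ Q)
    (hpos : ∀ᵐ ω ∂Q, 0 < η₁ ω ∧ 0 < η₂ ω) (a b : ℝ) :
    ∫ ω, max (a * (η₂ ω / η₁ ω) + b) 0
        ∂(Q.withDensity fun ω => ENNReal.ofReal (η₁ ω))
      = ∫ ω, max (a * η₂ ω + b * η₁ ω) 0 ∂Q := by
  have hm : AEMeasurable (fun ω => Real.toNNReal (η₁ ω)) Q :=
    h₁.aemeasurable.real_toNNReal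
  have hd : (fun ω => ENNReal.ofReal (η₁ ω))
      = fun ω => ((Real.toNNReal (η₁ ω) : NNReal) : ENNReal) := rfl
  rw [hd, integral_withDensity_eq_integral_smul₀ hm]
  refine integral_congr_ae ?_
  filter_upwards [hpos] with ω ⟨hω1, hω2⟩
  have h1 : (η₁ ω).toNNReal • max (a * (η₂ ω / η₁ ω) + b) 0
      = η₁ ω * max (a * (η₂ ω / η₁ ω) + b) 0 := by
    simp [NNReal.smul_def, Real.coe_toNNReal _ hω1.le]
  rw [h1, mul_max_of_nonneg _ _ hω1.le, mul_zero, mul_add, mul_comm (η₁ ω),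
    mul_assoc, div_mul_cancel₀ _ hω1.ne', mul_comm (η₁ ω) b]

/-- A bivariate integrable a.s. positive random vector
`η = (η₁, η₂)` with `E η₁ = 1` is 12-swap-invariant under `Q` iff
`η̃ = η₂/η₁` satisfies the classical put-call symmetry
`E_{Q¹}((u₁ η̃ + u₂)₊) = E_{Q¹}((u₁ + u₂ η̃)₊)` under the measure `Q¹` with
density `η₁` with respect to `Q`. -/
theorem stmt_8 {Ω : Type*} [MeasurableSpace Ω]
    (Q : Measure Ω) [IsProbabilityMeasure Q]
    (η₁ η₂ : Ω → ℝ) (h₁ : Integrable η₁ Q) (h₂ : Integrable η₂ Q)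
    (hpos : ∀ᵐ ω ∂Q, 0 < η₁ ω ∧ 0 < η₂ ω)
    (hmean : ∫ ω, η₁ ω ∂Q = 1) :
    (∀ u₁ u₂ : ℝ,
        ∫ ω, max (u₁ * η₁ ω + u₂ * η₂ ω) 0 ∂Q
          = ∫ ω, max (u₁ * η₂ ω + u₂ * η₁ ω) 0 ∂Q)
      ↔
    (∀ u₁ u₂ : ℝ,
        ∫ ω, max (u₁ * (η₂ ω / η₁ ω) + u₂) 0
            ∂(Q.withDensity fun ω => ENNReal.ofReal (η₁ ω))
          = ∫ ω, max (u₁ + u₂ * (η₂ ω / η₁ ω)) 0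
            ∂(Q.withDensity fun ω => ENNReal.ofReal (η₁ ω))) := by
  have key := key_eq Q η₁ η₂ h₁ hpos
  constructor
  · intro h u₁ u₂
    rw [key u₁ u₂]
    have : ∫ ω, max (u₁ + u₂ * (η₂ ω / η₁ ω)) 0
        ∂(Q.withDensity fun ω => ENNReal.ofReal (η₁ ω))
        = ∫ ω, max (u₂ * (η₂ ω / η₁ ω) + u₁) 0
        ∂(Q.withDensity fun ω => ENNReal.ofReal (η₁ ω)) := by
      simp [add_comm]
    rw [this, key u₂ u₁]
    have e1 : ∫ ω, max (u₁ * η₂ ω + u₂ * η₁ ω) 0 ∂Q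
        = ∫ ω, max (u₂ * η₁ ω + u₁ * η₂ ω) 0 ∂Q := by simp [add_comm]
    rw [e1, ← h u₂ u₁]
  · intro h u₁ u₂
    have hk := h u₂ u₁
    rw [key u₂ u₁] at hk
    have : ∫ ω, max (u₂ + u₁ * (η₂ ω / η₁ ω)) 0
        ∂(Q.withDensity fun ω => ENNReal.ofReal (η₁ ω))
        = ∫ ω, max (u₁ * (η₂ ω / η₁ ω) + u₂) 0
        ∂(Q.withDensity fun ω => ENNReal.ofReal (η₁ ω)) := by
      simp [add_comm]
    rw [this, key u₁ u₂] at hk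
    rw [show ∫ ω, max (u₁ * η₁ ω + u₂ * η₂ ω) 0 ∂Q
        = ∫ ω, max (u₂ * η₂ ω + u₁ * η₁ ω) 0 ∂Q by simp [add_comm], ← hk]
end

section
/- Let (ξ_1,ξ_2) be a bivariate Gaussian random vector with covariance matrix A = (a_{lm}) and mean (μ_1,μ_2) = (−a_{11}/2, −a_{22}/2) (the risk-neutral case, so E e^{ξ_1} = E e^{ξ_2} = 1), and set η = (e^{ξ_1}, e^{ξ_2}). Then η is swap-invariant: E((u_1η_1 + u_2η_2)₊) = E((u_1η_2 + u_2η_1)₊) for all (u_1,u_2) ∈ ℝ², regardless of the values of a_{11}, a_{22}, a_{12}. -/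
set_option linter.unusedSectionVars false
set_option maxHeartbeats 1000000
open MeasureTheory ProbabilityTheory Real Filter Complex
open scoped NNReal ENNReal

section Crux
variable (ρ : Measure ℝ) [IsFiniteMeasure ρ]

lemma integrable_exp_of_lintegral_ne_top
    (hfin : ∀ t : ℝ, ∫⁻ z, ENNReal.ofReal (Real.exp (t * z)) ∂ρ ≠ ⊤) (t : ℝ) :
    Integrable (fun z => Real.exp (t * z)) ρ := by
  refine ⟨(by fun_prop : Continuous fun z => Real.exp (t * z)).aestronglyMeasurable, ?_⟩
  rw [hasFiniteIntegral_iff_ofReal (Filter.Eventually.of_forall fun z => (Real.exp_nonneg _))]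
  exact (hfin t).lt_top

lemma integrable_cexp_of_lintegral_ne_top
    (hfin : ∀ t : ℝ, ∫⁻ z, ENNReal.ofReal (Real.exp (t * z)) ∂ρ ≠ ⊤) (w : ℂ) :
    Integrable (fun z : ℝ => Complex.exp (w * z)) ρ := by
  refine ((integrable_exp_of_lintegral_ne_top ρ hfin w.re).mono'
    (by fun_prop : Continuous fun z : ℝ => Complex.exp (w * z)).aestronglyMeasurable ?_)
  refine Filter.Eventually.of_forall fun z => ?_
  rw [Complex.norm_exp]
  simp [Complex.mul_re]

lemma hasDerivAt_F
    (hfin : ∀ t : ℝ, ∫⁻ z, ENNReal.ofReal (Real.exp (t * z)) ∂ρ ≠ ⊤) (w₀ : ℂ) :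
    HasDerivAt (fun w : ℂ => ∫ z : ℝ, Complex.exp (w * z) ∂ρ)
      (∫ z : ℝ, Complex.exp (w₀ * z) * z ∂ρ) w₀ := by
  set c : ℝ := ‖w₀‖ + 1 with hc
  have hbound_int : Integrable (fun z : ℝ => Real.exp ((c+1) * z) + Real.exp (-(c+1) * z)) ρ :=
    (integrable_exp_of_lintegral_ne_top ρ hfin (c+1)).add
      (integrable_exp_of_lintegral_ne_top ρ hfin (-(c+1)))
  have key := hasDerivAt_integral_of_dominated_loc_of_deriv_le (F := fun (w : ℂ) (z : ℝ) => Complex.exp (w * z))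
    (F' := fun (w : ℂ) (z : ℝ) => Complex.exp (w * z) * z)
    (bound := fun z : ℝ => Real.exp ((c+1) * z) + Real.exp (-(c+1) * z))
    (μ := ρ) (x₀ := w₀) (Metric.ball_mem_nhds w₀ one_pos)
    (Filter.Eventually.of_forall fun w =>
      (by fun_prop : Continuous fun z : ℝ => Complex.exp (w * z)).aestronglyMeasurable)
    (integrable_cexp_of_lintegral_ne_top ρ hfin w₀)
    ((by fun_prop : Continuous fun z : ℝ => Complex.exp (w₀ * z) * z).aestronglyMeasurable)
    ?_ hbound_int ?_
  · exact key.2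
  · refine Filter.Eventually.of_forall fun z => fun w hw => ?_
    have hre : |w.re| ≤ c := by
      have h1 : ‖w‖ ≤ c := by
        have := mem_ball_iff_norm.mp hw
        have := norm_sub_norm_le w w₀
        simp only [hc]; linarith
      exact (Complex.abs_re_le_norm w).trans h1
    have h2 : ‖Complex.exp (w * z) * z‖ = Real.exp (w.re * z) * |z| := by
      rw [norm_mul, Complex.norm_exp]
      simp [Complex.mul_re]
    rw [h2]
    have h3 : w.re * z ≤ c * |z| := by
      calc w.re * z ≤ |w.re * z| := le_abs_self _
      _ = |w.re| * |z| := abs_mul _ _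
      _ ≤ c * |z| := by
        apply mul_le_mul_of_nonneg_right hre (abs_nonneg _)
    have h4 : |z| ≤ Real.exp |z| := (Real.add_one_le_exp |z|).trans' (by linarith [abs_nonneg z])
    calc Real.exp (w.re * z) * |z| ≤ Real.exp (c * |z|) * Real.exp |z| := by
          apply mul_le_mul (Real.exp_le_exp.mpr h3) h4 (abs_nonneg _) (Real.exp_nonneg _)
      _ = Real.exp ((c+1) * |z|) := by rw [← Real.exp_add]; ring_nf
      _ ≤ Real.exp ((c+1) * z) + Real.exp (-(c+1) * z) := by
          have hc1 : (0:ℝ) ≤ c + 1 := by positivity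
          rcases abs_cases z with ⟨h, _⟩ | ⟨h, _⟩ <;> rw [h]
          · nlinarith [Real.exp_nonneg (-(c+1)*z)]
          · rw [mul_neg, ← neg_mul]
            linarith [Real.exp_nonneg ((c+1)*z)]
  · refine Filter.Eventually.of_forall fun z => fun w hw => ?_
    have : HasDerivAt (fun w : ℂ => w * z) z w := hasDerivAt_mul_const _
    simpa using this.cexp

end Crux

open MeasureTheory ProbabilityTheory Real Filter Complex
open scoped NNReal ENNReal

section Crux2
variable (ρ₁ ρ₂ : Measure ℝ) [IsFiniteMeasure ρ₁] [IsFiniteMeasure ρ₂]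



lemma F_real (ρ : Measure ℝ) (t : ℝ) :
    ∫ z : ℝ, Complex.exp ((t : ℂ) * z) ∂ρ = ((∫ z : ℝ, Real.exp (t * z) ∂ρ : ℝ) : ℂ) := by
  have h : (fun z : ℝ => Complex.exp ((t:ℂ) * z)) = fun z : ℝ => ((Real.exp (t*z) : ℝ) : ℂ) := by
    ext z
    rw [Complex.ofReal_exp, Complex.ofReal_mul]
  rw [h]
  exact integral_ofReal (𝕜 := ℂ)

lemma F_eq_of_mgf_eq
    (hfin₁ : ∀ t : ℝ, ∫⁻ z, ENNReal.ofReal (Real.exp (t * z)) ∂ρ₁ ≠ ⊤)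
    (hfin₂ : ∀ t : ℝ, ∫⁻ z, ENNReal.ofReal (Real.exp (t * z)) ∂ρ₂ ≠ ⊤)
    (heq : ∀ t : ℝ, ∫⁻ z, ENNReal.ofReal (Real.exp (t * z)) ∂ρ₁
      = ∫⁻ z, ENNReal.ofReal (Real.exp (t * z)) ∂ρ₂)
    (w : ℂ) :
    ∫ z : ℝ, Complex.exp (w * z) ∂ρ₁ = ∫ z : ℝ, Complex.exp (w * z) ∂ρ₂ := by
  have hreal : ∀ t : ℝ, ∫ z : ℝ, Real.exp (t * z) ∂ρ₁ = ∫ z : ℝ, Real.exp (t * z) ∂ρ₂ := by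
    intro t
    have h1 := ofReal_integral_eq_lintegral_ofReal (integrable_exp_of_lintegral_ne_top ρ₁ hfin₁ t)
      (Filter.Eventually.of_forall fun z => Real.exp_nonneg _)
    have h2 := ofReal_integral_eq_lintegral_ofReal (integrable_exp_of_lintegral_ne_top ρ₂ hfin₂ t)
      (Filter.Eventually.of_forall fun z => Real.exp_nonneg _)
    have := h1.trans ((heq t).trans h2.symm)
    rwa [ENNReal.ofReal_eq_ofReal_iff (integral_nonneg fun z => Real.exp_nonneg _)
      (integral_nonneg fun z => Real.exp_nonneg _)] at this
  set g : ℂ → ℂ := fun w => (∫ z : ℝ, Complex.exp (w * z) ∂ρ₁) - ∫ z : ℝ, Complex.exp (w * z) ∂ρ₂ with hg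
  have hdiff : Differentiable ℂ g :=
    fun w => ((hasDerivAt_F ρ₁ hfin₁ w).sub (hasDerivAt_F ρ₂ hfin₂ w)).differentiableAt
  have han : AnalyticOnNhd ℂ g Set.univ := analyticOnNhd_univ_iff_differentiable.mpr hdiff
  have hfreq : ∃ᶠ z in nhdsWithin (0:ℂ) {(0:ℂ)}ᶜ, g z = 0 := by
    have htend : Tendsto (fun n : ℕ => ((1/(n+1) : ℝ) : ℂ)) atTop (nhdsWithin (0:ℂ) {(0:ℂ)}ᶜ) := by
      rw [tendsto_nhdsWithin_iff]
      constructor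
      · have h0 : Tendsto (fun n : ℕ => (1/(n+1) : ℝ)) atTop (nhds 0) :=
          tendsto_one_div_add_atTop_nhds_zero_nat
        have h1 := (Complex.continuous_ofReal.tendsto 0).comp h0
        simpa [Function.comp_def] using h1
      · refine Filter.Eventually.of_forall fun n => ?_
        simp only [Set.mem_compl_iff, Set.mem_singleton_iff]
        intro h
        have : (1/(n+1) : ℝ) = 0 := by exact_mod_cast h
        have : (0:ℝ) < 1/(n+1) := by positivity
        linarith
    refine htend.frequently (Filter.Frequently.of_forall fun n => ?_)
    simp only [hg]
    rw [F_real, F_real, hreal]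
    ring
  have := han.eqOn_zero_of_preconnected_of_frequently_eq_zero isPreconnected_univ
    (Set.mem_univ (0:ℂ)) hfreq (Set.mem_univ w)
  have hz : g w = 0 := this
  simpa [hg, sub_eq_zero] using hz

end Crux2

open MeasureTheory ProbabilityTheory Real Filter Complex
open scoped NNReal ENNReal

noncomputable def gk (δ b : ℝ) (z t : ℝ) : ℂ :=
  Complex.exp (I * ((z:ℂ) - (b:ℂ)) * (t:ℂ)) * Complex.exp (-(1/(4*(δ:ℂ))) * (t:ℂ)^2)

lemma gk_norm (δ b : ℝ) (z t : ℝ) : ‖gk δ b z t‖ = Real.exp (-(1/(4*δ)) * t^2) := by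
  unfold gk
  rw [norm_mul, Complex.norm_exp, Complex.norm_exp]
  have h1 : (I * ((z:ℂ) - (b:ℂ)) * (t:ℂ)).re = 0 := by
    simp [Complex.mul_re, Complex.mul_im]
  have h2 : (-(1/(4*(δ:ℂ))) * (t:ℂ)^2) = ((-(1/(4*δ)) * t^2 : ℝ) : ℂ) := by push_cast; ring
  rw [h1, h2, Complex.ofReal_re]
  simp

lemma gk_integrable_prod (δ b : ℝ) (hδ : 0 < δ) (ρ : Measure ℝ) [IsFiniteMeasure ρ] :
    Integrable (Function.uncurry (gk δ b)) (ρ.prod volume) := by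
  have hcont : Continuous (Function.uncurry (gk δ b)) := by
    unfold Function.uncurry gk
    fun_prop
  rw [integrable_prod_iff hcont.aestronglyMeasurable]
  have hb4 : (0:ℝ) < 1/(4*δ) := by positivity
  constructor
  · refine Filter.Eventually.of_forall fun z => ?_
    refine (integrable_exp_neg_mul_sq hb4).mono'
      (by unfold gk; fun_prop : Continuous fun t => gk δ b z t).aestronglyMeasurable ?_
    exact Filter.Eventually.of_forall fun t => le_of_eq (gk_norm δ b z t)
  · simp_rw [Function.uncurry_apply_pair, gk_norm]
    exact integrable_const _

lemma gaussian_test_key (δ b : ℝ) (hδ : 0 < δ) (ρ : Measure ℝ) [IsFiniteMeasure ρ] :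
    ((π / (1/(4*(δ:ℂ)))) ^ (1/2 : ℂ)) * ∫ z : ℝ, ((Real.exp (-δ*(z-b)^2) : ℝ) : ℂ) ∂ρ
      = ∫ t : ℝ, (Complex.exp (-(I*(b:ℂ)*(t:ℂ))) * Complex.exp (-(1/(4*(δ:ℂ))) * (t:ℂ)^2))
          * (∫ z : ℝ, Complex.exp ((I*(t:ℂ)) * (z:ℂ)) ∂ρ) ∂volume := by
  have hb4 : (0:ℝ) < 1/(4*δ) := by positivity
  have hbre : 0 < (1/(4*(δ:ℂ))).re := by
    have : (1/(4*(δ:ℂ))) = ((1/(4*δ) : ℝ) : ℂ) := by push_cast; ring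
    rw [this, Complex.ofReal_re]; exact hb4
  have hsplit : ∀ z t : ℝ, (Complex.exp (-(I*(b:ℂ)*(t:ℂ))) * Complex.exp (-(1/(4*(δ:ℂ))) * (t:ℂ)^2))
      * Complex.exp ((I*(t:ℂ)) * (z:ℂ)) = gk δ b z t := by
    intro z t
    unfold gk
    rw [← Complex.exp_add, ← Complex.exp_add, ← Complex.exp_add]
    congr 1
    ring
  have hswap := integral_integral_swap (f := gk δ b) (μ := ρ) (ν := volume)
    (gk_integrable_prod δ b hδ ρ)
  calc ((π / (1/(4*(δ:ℂ)))) ^ (1/2 : ℂ)) * ∫ z : ℝ, ((Real.exp (-δ*(z-b)^2) : ℝ) : ℂ) ∂ρ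
      = ∫ z : ℝ, ((π / (1/(4*(δ:ℂ)))) ^ (1/2 : ℂ)) * ((Real.exp (-δ*(z-b)^2) : ℝ) : ℂ) ∂ρ := by
        rw [integral_const_mul]
    _ = ∫ z : ℝ, ∫ t : ℝ, gk δ b z t ∂volume ∂ρ := by
        congr 1
        ext z
        have := fourierIntegral_gaussian hbre ((z:ℂ) - (b:ℂ))
        unfold gk
        rw [this]
        congr 1
        have h4 : -((z:ℂ)-(b:ℂ))^2 / (4 * (1/(4*(δ:ℂ)))) = ((-δ*(z-b)^2 : ℝ) : ℂ) := by
          push_cast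
          field_simp
        rw [h4, ← Complex.ofReal_exp]
    _ = ∫ t : ℝ, ∫ z : ℝ, gk δ b z t ∂ρ ∂volume := hswap
    _ = ∫ t : ℝ, (Complex.exp (-(I*(b:ℂ)*(t:ℂ))) * Complex.exp (-(1/(4*(δ:ℂ))) * (t:ℂ)^2))
          * (∫ z : ℝ, Complex.exp ((I*(t:ℂ)) * (z:ℂ)) ∂ρ) ∂volume := by
        congr 1
        ext t
        simp_rw [← hsplit]
        rw [integral_const_mul]

open MeasureTheory ProbabilityTheory Real Filter
open scoped NNReal ENNReal

noncomputable def vv (n : ℕ) : ℝ≥0 := Real.toNNReal (1/(2*((n:ℝ)+1)))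

lemma vv_coe (n : ℕ) : ((vv n : ℝ≥0) : ℝ) = 1/(2*((n:ℝ)+1)) :=
  Real.coe_toNNReal _ (by positivity)

lemma vv_ne (n : ℕ) : vv n ≠ 0 := by
  intro h
  have h2 := vv_coe n
  rw [h] at h2
  simp only [NNReal.coe_zero] at h2
  have : (0:ℝ) < 1/(2*((n:ℝ)+1)) := by positivity
  linarith

noncomputable def cc (n : ℕ) : ℝ := Real.sqrt (vv n)

lemma cc_tendsto : Tendsto cc atTop (nhds 0) := by
  have h2 : Tendsto (fun n : ℕ => ((n:ℝ)+1)) atTop atTop :=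
    tendsto_atTop_add_const_right _ 1 tendsto_natCast_atTop_atTop
  have h3 : Tendsto (fun n : ℕ => (2*((n:ℝ)+1))) atTop atTop := h2.const_mul_atTop two_pos
  have h1 : Tendsto (fun n : ℕ => 1/(2*((n:ℝ)+1))) atTop (nhds 0) := by
    simpa [Function.comp_def, one_div] using tendsto_inv_atTop_zero.comp h3
  have h4 : Tendsto (fun n : ℕ => Real.sqrt (1/(2*((n:ℝ)+1)))) atTop (nhds (Real.sqrt 0)) :=
    (Real.continuous_sqrt.tendsto 0).comp h1
  rw [Real.sqrt_zero] at h4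
  have : cc = fun n : ℕ => Real.sqrt (1/(2*((n:ℝ)+1))) := by
    funext n
    rw [cc, vv_coe]
  rw [this]
  exact h4

lemma pdf_form (n : ℕ) (z b : ℝ) :
    gaussianPDFReal z (vv n) b
      = (Real.sqrt (2 * π * (vv n)))⁻¹ * Real.exp (-((n:ℝ)+1) * (z - b)^2) := by
  simp only [gaussianPDFReal_def]
  congr 1
  have hco := vv_coe n
  have hpos : (0:ℝ) < ((n:ℝ)+1) := by positivity
  rw [hco]
  congr 1
  field_simp
  ring

noncomputable def rr (g : ℝ → ℝ) (n : ℕ) (z : ℝ) : ℝ :=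
  ∫ b, gaussianPDFReal z (vv n) b * g b ∂volume

section Bounds
variable {g : ℝ → ℝ} {M : ℝ}

lemma rr_integrand_integrable (hg : Continuous g) (hg0 : ∀ x, 0 ≤ g x) (hM : ∀ x, g x ≤ M) (n : ℕ) (z : ℝ) :
    Integrable (fun b => gaussianPDFReal z (vv n) b * g b) volume := by
  refine ((integrable_gaussianPDFReal z (vv n)).const_mul M).mono'
    ((stronglyMeasurable_gaussianPDFReal z (vv n)).measurable.aemeasurable.aestronglyMeasurable.mul
      hg.aestronglyMeasurable) ?_
  refine Filter.Eventually.of_forall fun b => ?_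
  rw [Real.norm_eq_abs, abs_mul, _root_.abs_of_nonneg (gaussianPDFReal_nonneg _ _ _),
    _root_.abs_of_nonneg (hg0 b), mul_comm M]
  exact mul_le_mul_of_nonneg_left (hM b) (gaussianPDFReal_nonneg _ _ _)

lemma rr_nonneg (hg0 : ∀ x, 0 ≤ g x) (n : ℕ) (z : ℝ) : 0 ≤ rr g n z :=
  integral_nonneg fun b => mul_nonneg (gaussianPDFReal_nonneg _ _ _) (hg0 b)

lemma rr_le (hg : Continuous g) (hg0 : ∀ x, 0 ≤ g x) (hM : ∀ x, g x ≤ M) (n : ℕ) (z : ℝ) : rr g n z ≤ M := by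
  have h : rr g n z ≤ ∫ b, gaussianPDFReal z (vv n) b * M ∂volume := by
    refine integral_mono (rr_integrand_integrable hg hg0 hM n z)
      ((integrable_gaussianPDFReal z (vv n)).mul_const M) ?_
    intro b
    exact mul_le_mul_of_nonneg_left (hM b) (gaussianPDFReal_nonneg _ _ _)
  rwa [integral_mul_const, integral_gaussianPDFReal_eq_one z (vv_ne n), one_mul] at h

lemma rr_formA (hg : Continuous g) (n : ℕ) (z : ℝ) :
    rr g n z = ∫ x, g (z + cc n * x) ∂(gaussianReal 0 1) := by
  have h1 : Measure.map (fun x : ℝ => cc n * x) (gaussianReal 0 1) = gaussianReal 0 (vv n) := by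
    rw [show (fun x : ℝ => cc n * x) = (cc n * ·) from rfl, gaussianReal_map_const_mul]
    congr 1
    · ring
    · ext
      simp only [NNReal.coe_mul, NNReal.coe_mk, NNReal.coe_one, mul_one]
      rw [cc, Real.sq_sqrt (vv n).coe_nonneg]
  have h2 : Measure.map (fun x : ℝ => z + x) (gaussianReal 0 (vv n)) = gaussianReal z (vv n) := by
    rw [show (fun x : ℝ => z + x) = (z + ·) from rfl, gaussianReal_map_const_add, zero_add]
  have h3 : gaussianReal z (vv n) = Measure.map (fun x : ℝ => z + cc n * x) (gaussianReal 0 1) := by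
    rw [← h2, ← h1, Measure.map_map (by fun_prop) (by fun_prop)]
    rfl
  have h4 : ∫ b, g b ∂(gaussianReal z (vv n)) = ∫ x, g (z + cc n * x) ∂(gaussianReal 0 1) := by
    rw [h3, integral_map (by fun_prop) hg.aestronglyMeasurable]
  rw [← h4, rr, gaussianReal_of_var_ne_zero _ (vv_ne n)]
  have h5 : (gaussianPDF z (vv n)) = fun b => ((Real.toNNReal (gaussianPDFReal z (vv n) b) : ℝ≥0) : ℝ≥0∞) := by
    ext b
    rfl
  rw [h5, integral_withDensity_eq_integral_smul
    ((stronglyMeasurable_gaussianPDFReal z (vv n)).measurable.real_toNNReal)]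
  congr 1
  ext b
  rw [NNReal.smul_def, smul_eq_mul, Real.coe_toNNReal _ (gaussianPDFReal_nonneg _ _ _)]

lemma rr_tendsto (hg : Continuous g) (hg0 : ∀ x, 0 ≤ g x) (hM : ∀ x, g x ≤ M) (z : ℝ) : Tendsto (fun n => rr g n z) atTop (nhds (g z)) := by
  simp_rw [rr_formA hg]
  have h : Tendsto (fun n => ∫ x, g (z + cc n * x) ∂(gaussianReal 0 1)) atTop
      (nhds (∫ x, g z ∂(gaussianReal 0 1))) := by
    refine tendsto_integral_of_dominated_convergence (fun _ => M) ?_ (integrable_const M) ?_ ?_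
    · exact fun n => (hg.comp (by fun_prop)).aestronglyMeasurable
    · intro n
      refine Filter.Eventually.of_forall fun x => ?_
      rw [Real.norm_eq_abs, _root_.abs_of_nonneg (hg0 _)]
      exact hM _
    · refine Filter.Eventually.of_forall fun x => ?_
      have harg : Tendsto (fun n => z + cc n * x) atTop (nhds (z + 0 * x)) :=
        tendsto_const_nhds.add (cc_tendsto.mul_const x)
      rw [zero_mul, add_zero] at harg
      exact (hg.tendsto z).comp harg
  simpa using h

end Bounds

lemma rr_lintegral (g : ℝ → ℝ) (hg : Continuous g) (hg0 : ∀ x, 0 ≤ g x) {M : ℝ} (hM : ∀ x, g x ≤ M)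
    (n : ℕ) (ρ : Measure ℝ) [IsFiniteMeasure ρ] :
    ∫⁻ z, ENNReal.ofReal (rr g n z) ∂ρ
      = ∫⁻ b, ENNReal.ofReal (g b) * (ENNReal.ofReal ((Real.sqrt (2 * π * (vv n)))⁻¹)
          * ENNReal.ofReal (∫ z, Real.exp (-((n:ℝ)+1) * (z-b)^2) ∂ρ)) ∂volume := by
  have step1 : ∀ z : ℝ, ENNReal.ofReal (rr g n z)
      = ∫⁻ b, ENNReal.ofReal (gaussianPDFReal z (vv n) b * g b) ∂volume := by
    intro z
    rw [rr, ofReal_integral_eq_lintegral_ofReal (rr_integrand_integrable hg hg0 hM n z)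
      (Filter.Eventually.of_forall fun b => mul_nonneg (gaussianPDFReal_nonneg _ _ _) (hg0 b))]
  simp_rw [step1]
  rw [lintegral_lintegral_swap]
  · congr 1
    ext b
    have hpt : ∀ z : ℝ, ENNReal.ofReal (gaussianPDFReal z (vv n) b * g b)
        = ENNReal.ofReal (g b) * (ENNReal.ofReal ((Real.sqrt (2 * π * (vv n)))⁻¹)
          * ENNReal.ofReal (Real.exp (-((n:ℝ)+1) * (z-b)^2))) := by
      intro z
      rw [pdf_form n z b,
        show (Real.sqrt (2*π*(vv n)))⁻¹ * Real.exp (-((n:ℝ)+1)*(z-b)^2) * g b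
            = g b * ((Real.sqrt (2*π*(vv n)))⁻¹ * Real.exp (-((n:ℝ)+1)*(z-b)^2)) from by ring,
        ENNReal.ofReal_mul (hg0 b),
        ENNReal.ofReal_mul (by positivity : (0:ℝ) ≤ (Real.sqrt (2*π*(vv n)))⁻¹)]
    simp_rw [hpt]
    rw [lintegral_const_mul _ (by fun_prop), lintegral_const_mul _ (by fun_prop)]
    congr 2
    rw [ofReal_integral_eq_lintegral_ofReal]
    · refine (integrable_const (1:ℝ)).mono' ?_ ?_
      · exact (by fun_prop : Continuous fun z : ℝ => Real.exp (-((n:ℝ)+1) * (z-b)^2)).aestronglyMeasurable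
      · refine Filter.Eventually.of_forall fun z => ?_
        rw [Real.norm_eq_abs, _root_.abs_of_nonneg (Real.exp_nonneg _)]
        exact Real.exp_le_one_iff.mpr (by nlinarith [sq_nonneg (z - b)])
    · exact Filter.Eventually.of_forall fun z => Real.exp_nonneg _
  · refine Measurable.aemeasurable ?_
    have hcont : Continuous fun p : ℝ × ℝ => gaussianPDFReal p.1 (vv n) p.2 * g p.2 := by
      simp only [gaussianPDFReal_def]
      fun_prop
    exact hcont.measurable.ennreal_ofReal

lemma rr_measurable (g : ℝ → ℝ) (hg : Continuous g) (n : ℕ) :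
    Measurable fun z => ENNReal.ofReal (rr g n z) := by
  refine Measurable.ennreal_ofReal ?_
  have hcont : Continuous fun p : ℝ × ℝ => gaussianPDFReal p.1 (vv n) p.2 * g p.2 := by
    simp only [gaussianPDFReal_def]
    fun_prop
  exact (hcont.stronglyMeasurable.integral_prod_right').measurable

lemma lintegral_eq_of_gaussian_tests (ρ₁ ρ₂ : Measure ℝ) [IsFiniteMeasure ρ₁] [IsFiniteMeasure ρ₂]
    (hgauss : ∀ δ b : ℝ, 0 < δ → ∫ z, Real.exp (-δ*(z-b)^2) ∂ρ₁ = ∫ z, Real.exp (-δ*(z-b)^2) ∂ρ₂)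
    (g : ℝ → ℝ) (hg : Continuous g) (hg0 : ∀ x, 0 ≤ g x) (M : ℝ) (hM : ∀ x, g x ≤ M) :
    ∫⁻ z, ENNReal.ofReal (g z) ∂ρ₁ = ∫⁻ z, ENNReal.ofReal (g z) ∂ρ₂ := by
  have key : ∀ n : ℕ, ∫⁻ z, ENNReal.ofReal (rr g n z) ∂ρ₁ = ∫⁻ z, ENNReal.ofReal (rr g n z) ∂ρ₂ := by
    intro n
    rw [rr_lintegral g hg hg0 hM n ρ₁, rr_lintegral g hg hg0 hM n ρ₂]
    congr 1
    ext b
    rw [hgauss ((n:ℝ)+1) b (by positivity)]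
  have hdom : ∀ (ρ : Measure ℝ) [IsFiniteMeasure ρ],
      Tendsto (fun n => ∫⁻ z, ENNReal.ofReal (rr g n z) ∂ρ) atTop
        (nhds (∫⁻ z, ENNReal.ofReal (g z) ∂ρ)) := by
    intro ρ hρ
    refine tendsto_lintegral_of_dominated_convergence (fun _ => ENNReal.ofReal M)
      (rr_measurable g hg) ?_ ?_ ?_
    · intro n
      exact Filter.Eventually.of_forall fun z => ENNReal.ofReal_le_ofReal (rr_le hg hg0 hM n z)
    · rw [lintegral_const]
      exact ENNReal.mul_ne_top ENNReal.ofReal_ne_top (measure_ne_top ρ _)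
    · exact Filter.Eventually.of_forall fun z => ENNReal.tendsto_ofReal (rr_tendsto hg hg0 hM z)
  have h1 := hdom ρ₁
  have h2 := hdom ρ₂
  simp_rw [key] at h1
  exact tendsto_nhds_unique h1 h2

section CruxMain
open MeasureTheory ProbabilityTheory Real Filter Complex
open scoped NNReal ENNReal

theorem crux (ρ₁ ρ₂ : Measure ℝ) [IsFiniteMeasure ρ₁] [IsFiniteMeasure ρ₂]
    (hfin₁ : ∀ t : ℝ, ∫⁻ z, ENNReal.ofReal (Real.exp (t * z)) ∂ρ₁ ≠ ⊤)
    (hfin₂ : ∀ t : ℝ, ∫⁻ z, ENNReal.ofReal (Real.exp (t * z)) ∂ρ₂ ≠ ⊤)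
    (heq : ∀ t : ℝ, ∫⁻ z, ENNReal.ofReal (Real.exp (t * z)) ∂ρ₁
      = ∫⁻ z, ENNReal.ofReal (Real.exp (t * z)) ∂ρ₂) :
    ρ₁ = ρ₂ := by
  have hF := F_eq_of_mgf_eq ρ₁ ρ₂ hfin₁ hfin₂ heq
  -- gaussian test functions agree
  have hgauss : ∀ δ b : ℝ, 0 < δ →
      ∫ z, Real.exp (-δ*(z-b)^2) ∂ρ₁ = ∫ z, Real.exp (-δ*(z-b)^2) ∂ρ₂ := by
    intro δ b hδ
    have k1 := gaussian_test_key δ b hδ ρ₁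
    have k2 := gaussian_test_key δ b hδ ρ₂
    have hrhs : (∫ t : ℝ, (Complex.exp (-(I*(b:ℂ)*(t:ℂ))) * Complex.exp (-(1/(4*(δ:ℂ))) * (t:ℂ)^2))
          * (∫ z : ℝ, Complex.exp ((I*(t:ℂ)) * (z:ℂ)) ∂ρ₁) ∂volume)
        = ∫ t : ℝ, (Complex.exp (-(I*(b:ℂ)*(t:ℂ))) * Complex.exp (-(1/(4*(δ:ℂ))) * (t:ℂ)^2))
          * (∫ z : ℝ, Complex.exp ((I*(t:ℂ)) * (z:ℂ)) ∂ρ₂) ∂volume := by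
      congr 1
      ext t
      rw [hF (I*(t:ℂ))]
    have hC : ((π / (1/(4*(δ:ℂ)))) ^ (1/2 : ℂ)) ≠ 0 := by
      intro h
      rw [Complex.cpow_eq_zero_iff] at h
      have hbase : ((π :ℂ) / (1/(4*(δ:ℂ)))) ≠ 0 := by
        apply div_ne_zero
        · exact Complex.ofReal_ne_zero.mpr Real.pi_ne_zero
        · apply one_div_ne_zero
          simp only [ne_eq, mul_eq_zero, OfNat.ofNat_ne_zero, false_or, Complex.ofReal_eq_zero]
          exact hδ.ne'
      exact hbase h.1
    have hmain : ((π / (1/(4*(δ:ℂ)))) ^ (1/2 : ℂ)) * ∫ z : ℝ, ((Real.exp (-δ*(z-b)^2) : ℝ) : ℂ) ∂ρ₁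
        = ((π / (1/(4*(δ:ℂ)))) ^ (1/2 : ℂ)) * ∫ z : ℝ, ((Real.exp (-δ*(z-b)^2) : ℝ) : ℂ) ∂ρ₂ := by
      rw [k1, k2, hrhs]
    have hcc := mul_left_cancel₀ hC hmain
    have e1 : ∫ z : ℝ, ((Real.exp (-δ*(z-b)^2) : ℝ) : ℂ) ∂ρ₁
        = ((∫ z : ℝ, Real.exp (-δ*(z-b)^2) ∂ρ₁ : ℝ) : ℂ) := integral_ofReal (𝕜 := ℂ)
    have e2 : ∫ z : ℝ, ((Real.exp (-δ*(z-b)^2) : ℝ) : ℂ) ∂ρ₂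
        = ((∫ z : ℝ, Real.exp (-δ*(z-b)^2) ∂ρ₂ : ℝ) : ℂ) := integral_ofReal (𝕜 := ℂ)
    rw [e1, e2] at hcc
    exact_mod_cast hcc
  -- conclude by bounded continuous extensionality
  refine ext_of_forall_lintegral_eq_of_IsFiniteMeasure fun f => ?_
  set g : ℝ → ℝ := fun x => ((f x : ℝ≥0) : ℝ) with hgdef
  have hgc : Continuous g := NNReal.continuous_coe.comp f.continuous
  have hg0 : ∀ x, 0 ≤ g x := fun x => (f x).coe_nonneg
  obtain ⟨C, hC⟩ := f.bounded
  have hM : ∀ x, g x ≤ (f 0 : ℝ) + C := by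
    intro x
    have := hC x 0
    rw [NNReal.dist_eq] at this
    have h2 := le_of_abs_le this
    linarith [sub_le_iff_le_add'.mp (le_of_abs_le this)]
  have := lintegral_eq_of_gaussian_tests ρ₁ ρ₂ hgauss g hgc hg0 _ hM
  have hcoe : ∀ (ρ : Measure ℝ), ∫⁻ x, (f x : ℝ≥0∞) ∂ρ = ∫⁻ x, ENNReal.ofReal (g x) ∂ρ := by
    intro ρ
    apply lintegral_congr
    intro x
    rw [hgdef]
    simp [ENNReal.ofReal_coe_nnreal]
  rw [hcoe ρ₁, hcoe ρ₂, this]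

end CruxMain

open MeasureTheory ProbabilityTheory Real
open scoped NNReal ENNReal

lemma gaussianPDFReal_mul_exp (m : ℝ) (v : ℝ≥0) (hv : v ≠ 0) (t x : ℝ) :
    gaussianPDFReal m v x * Real.exp (t * x)
      = Real.exp (t * m + t ^ 2 * v / 2) * gaussianPDFReal (m + t * v) v x := by
  have hv0 : (0:ℝ) < (v:ℝ) := by exact_mod_cast pos_iff_ne_zero.mpr hv
  unfold gaussianPDFReal
  rw [mul_assoc, ← Real.exp_add, mul_left_comm, ← Real.exp_add]
  congr 1
  field_simp
  ring

lemma lintegral_exp_gaussianReal (m : ℝ) (v : ℝ≥0) (t : ℝ) :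
    ∫⁻ x, ENNReal.ofReal (Real.exp (t * x)) ∂(gaussianReal m v)
      = ENNReal.ofReal (Real.exp (t * m + t ^ 2 * v / 2)) := by
  rcases eq_or_ne v 0 with hv | hv
  · subst hv
    rw [gaussianReal_zero_var, lintegral_dirac' _ (by fun_prop)]
    norm_num
  · rw [gaussianReal_of_var_ne_zero _ hv,
      lintegral_withDensity_eq_lintegral_mul _ (measurable_gaussianPDF m v) (by fun_prop)]
    have : ∀ x : ℝ, (gaussianPDF m v * fun x => ENNReal.ofReal (rexp (t * x))) x
        = ENNReal.ofReal (rexp (t * m + t ^ 2 * v / 2)) * ENNReal.ofReal (gaussianPDFReal (m + t * v) v x) := by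
      intro x
      simp only [Pi.mul_apply, gaussianPDF]
      rw [← ENNReal.ofReal_mul (gaussianPDFReal_nonneg _ _ _), gaussianPDFReal_mul_exp m v hv,
        ENNReal.ofReal_mul (Real.exp_nonneg _)]
    simp_rw [this]
    rw [lintegral_const_mul _ (by exact (measurable_gaussianPDFReal _ _).ennreal_ofReal),
      lintegral_gaussianPDFReal_eq_one _ hv, mul_one]

open MeasureTheory ProbabilityTheory Real
open scoped NNReal ENNReal

/-- Every risk-neutral bivariate lognormal model is
swap-invariant: if `ξ = (ξ₁,ξ₂)` is bivariate Gaussian with covariance matrix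
`A` and mean `μ_l = -a_{ll}/2` (so that `E e^{ξ_l} = 1`), then for
`η = (e^{ξ₁}, e^{ξ₂})` one has
`E((u₁η₁ + u₂η₂)₊) = E((u₁η₂ + u₂η₁)₊)` for all `u₁, u₂ ∈ ℝ`, regardless of
`a₁₁, a₂₂, a₁₂`. -/
theorem stmt_17 {Ω : Type*} [MeasurableSpace Ω]
    (P : Measure Ω) [IsProbabilityMeasure P]
    (ξ : Ω → Fin 2 → ℝ) (hmeas : AEMeasurable ξ P)
    (A : Matrix (Fin 2) (Fin 2) ℝ) (hA : A.PosSemidef)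
    (hGauss : ∀ u : Fin 2 → ℝ,
        Measure.map (fun ω => ∑ l, u l * ξ ω l) P
          = gaussianReal (∑ l, u l * (-(A l l) / 2)) (∑ l, ∑ k, u l * A l k * u k).toNNReal) :
    ∀ u₁ u₂ : ℝ,
      ∫ ω, max (u₁ * Real.exp (ξ ω 0) + u₂ * Real.exp (ξ ω 1)) 0 ∂P
        = ∫ ω, max (u₁ * Real.exp (ξ ω 1) + u₂ * Real.exp (ξ ω 0)) 0 ∂P := by
  have hX : AEMeasurable (fun ω => ξ ω 0) P := (measurable_pi_apply 0).comp_aemeasurable hmeas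
  have hY : AEMeasurable (fun ω => ξ ω 1) P := (measurable_pi_apply 1).comp_aemeasurable hmeas
  have hsym : A 1 0 = A 0 1 := by
    have := hA.1.apply 1 0
    simpa using this.symm
  set σ2 : ℝ := A 0 0 + A 1 1 - 2 * A 0 1 with hσ2
  -- the key one-dimensional exponential moment computation
  have L : ∀ s : ℝ, ∫⁻ ω, ENNReal.ofReal (Real.exp (s * ξ ω 0 + (1 - s) * ξ ω 1)) ∂P
      = ENNReal.ofReal (Real.exp (σ2 / 2 * (s ^ 2 - s))) := by
    intro s
    set u : Fin 2 → ℝ := ![s, 1 - s] with hu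
    have hsum : ∀ ω, s * ξ ω 0 + (1 - s) * ξ ω 1 = ∑ l, u l * ξ ω l := by
      intro ω
      simp [hu, Fin.sum_univ_two]
    simp_rw [hsum]
    have hcomb : AEMeasurable (fun ω => ∑ l, u l * ξ ω l) P := by
      simp_rw [Fin.sum_univ_two]
      exact (hX.const_mul (u 0)).add (hY.const_mul (u 1))
    have hmap : ∫⁻ ω, ENNReal.ofReal (Real.exp (∑ l, u l * ξ ω l)) ∂P
        = ∫⁻ x, ENNReal.ofReal (Real.exp (1 * x)) ∂(Measure.map (fun ω => ∑ l, u l * ξ ω l) P) := by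
      rw [lintegral_map' (by fun_prop) hcomb]
      simp only [one_mul]
    rw [hmap, hGauss u, lintegral_exp_gaussianReal]
    simp only [one_mul, one_pow]
    congr 1
    -- arithmetic identity
    have hV : (0:ℝ) ≤ ∑ l, ∑ k, u l * A l k * u k := by
      have h2 := (Matrix.posSemidef_iff_dotProduct_mulVec.mp hA).2 u
      have hdot : dotProduct (star u) (A.mulVec u) = ∑ l, ∑ k, u l * A l k * u k := by
        simp [dotProduct, Matrix.mulVec, Finset.mul_sum, mul_assoc, Fin.sum_univ_two]
        ring
      rwa [hdot] at h2
    rw [Real.coe_toNNReal _ hV]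
    congr 1
    simp only [hu, Fin.sum_univ_two, Matrix.cons_val_zero, Matrix.cons_val_one, Matrix.head_cons]
    rw [hsym, hσ2]
    ring
  -- tilted pushforward measures
  set eY : Ω → ℝ≥0∞ := fun ω => ENNReal.ofReal (Real.exp (ξ ω 1)) with heY
  set eX : Ω → ℝ≥0∞ := fun ω => ENNReal.ofReal (Real.exp (ξ ω 0)) with heX
  have heYm : AEMeasurable eY P := (Real.measurable_exp.comp_aemeasurable hY).ennreal_ofReal
  have heXm : AEMeasurable eX P := (Real.measurable_exp.comp_aemeasurable hX).ennreal_ofReal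
  set ν : Measure ℝ := Measure.map (fun ω => ξ ω 0 - ξ ω 1) (P.withDensity eY) with hν
  set ν' : Measure ℝ := Measure.map (fun ω => ξ ω 1 - ξ ω 0) (P.withDensity eX) with hν'
  have hZm : AEMeasurable (fun ω => ξ ω 0 - ξ ω 1) P := hX.sub hY
  have hZm' : AEMeasurable (fun ω => ξ ω 1 - ξ ω 0) P := hY.sub hX
  have hZmw : AEMeasurable (fun ω => ξ ω 0 - ξ ω 1) (P.withDensity eY) :=
    hZm.mono' (withDensity_absolutelyContinuous P eY)
  have hZmw' : AEMeasurable (fun ω => ξ ω 1 - ξ ω 0) (P.withDensity eX) :=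
    hZm'.mono' (withDensity_absolutelyContinuous P eX)
  -- lintegrals against ν
  have hν_int : ∀ (f : ℝ → ℝ≥0∞), Measurable f →
      ∫⁻ z, f z ∂ν = ∫⁻ ω, eY ω * f (ξ ω 0 - ξ ω 1) ∂P := by
    intro f hf
    rw [hν, lintegral_map' hf.aemeasurable hZmw,
      lintegral_withDensity_eq_lintegral_mul₀ heYm
        (show AEMeasurable (fun ω => f (ξ ω 0 - ξ ω 1)) P from hf.comp_aemeasurable hZm)]
    rfl
  have hν'_int : ∀ (f : ℝ → ℝ≥0∞), Measurable f →
      ∫⁻ z, f z ∂ν' = ∫⁻ ω, eX ω * f (ξ ω 1 - ξ ω 0) ∂P := by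
    intro f hf
    rw [hν', lintegral_map' hf.aemeasurable hZmw',
      lintegral_withDensity_eq_lintegral_mul₀ heXm
        (show AEMeasurable (fun ω => f (ξ ω 1 - ξ ω 0)) P from hf.comp_aemeasurable hZm')]
    rfl
  -- mgf of ν and ν'
  have mgf_ν : ∀ t : ℝ, ∫⁻ z, ENNReal.ofReal (Real.exp (t * z)) ∂ν
      = ENNReal.ofReal (Real.exp (σ2 / 2 * (t ^ 2 - t))) := by
    intro t
    rw [hν_int _ (by fun_prop)]
    have hpt : ∀ ω, eY ω * ENNReal.ofReal (Real.exp (t * (ξ ω 0 - ξ ω 1)))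
        = ENNReal.ofReal (Real.exp (t * ξ ω 0 + (1 - t) * ξ ω 1)) := by
      intro ω
      rw [heY]
      simp only
      rw [← ENNReal.ofReal_mul (Real.exp_nonneg _), ← Real.exp_add]
      congr 1
      ring
    simp_rw [hpt]
    exact L t
  have mgf_ν' : ∀ t : ℝ, ∫⁻ z, ENNReal.ofReal (Real.exp (t * z)) ∂ν'
      = ENNReal.ofReal (Real.exp (σ2 / 2 * (t ^ 2 - t))) := by
    intro t
    rw [hν'_int _ (by fun_prop)]
    have hpt : ∀ ω, eX ω * ENNReal.ofReal (Real.exp (t * (ξ ω 1 - ξ ω 0)))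
        = ENNReal.ofReal (Real.exp ((1 - t) * ξ ω 0 + (1 - (1 - t)) * ξ ω 1)) := by
      intro ω
      rw [heX]
      simp only
      rw [← ENNReal.ofReal_mul (Real.exp_nonneg _), ← Real.exp_add]
      congr 1
      ring
    simp_rw [hpt]
    rw [L (1 - t)]
    congr 2
    ring
  -- finiteness of the tilted measures
  have hνfin : IsFiniteMeasure ν := by
    constructor
    rw [← lintegral_one]
    have h0 := mgf_ν 0
    simp only [zero_mul, Real.exp_zero, ENNReal.ofReal_one] at h0
    rw [h0]
    exact ENNReal.ofReal_lt_top
  have hν'fin : IsFiniteMeasure ν' := by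
    constructor
    rw [← lintegral_one]
    have h0 := mgf_ν' 0
    simp only [zero_mul, Real.exp_zero, ENNReal.ofReal_one] at h0
    rw [h0]
    exact ENNReal.ofReal_lt_top
  -- the two tilted measures coincide
  have hνν' : ν = ν' := by
    refine crux ν ν' ?_ ?_ ?_
    · intro t
      rw [mgf_ν t]
      exact ENNReal.ofReal_ne_top
    · intro t
      rw [mgf_ν' t]
      exact ENNReal.ofReal_ne_top
    · intro t
      rw [mgf_ν t, mgf_ν' t]
  -- payoff transformation
  intro u₁ u₂
  have payoff : ∀ (c₁ c₂ x y : ℝ),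
      ENNReal.ofReal (Real.exp y) * ENNReal.ofReal (max (c₁ * Real.exp (x - y) + c₂) 0)
        = ENNReal.ofReal (max (c₁ * Real.exp x + c₂ * Real.exp y) 0) := by
    intro c₁ c₂ x y
    rw [← ENNReal.ofReal_mul (Real.exp_nonneg _), mul_max_of_nonneg _ _ (Real.exp_nonneg y),
      mul_zero]
    have hxy : Real.exp y * Real.exp (x - y) = Real.exp x := by
      rw [← Real.exp_add]
      congr 1
      ring
    have hlin : Real.exp y * (c₁ * Real.exp (x - y) + c₂) = c₁ * Real.exp x + c₂ * Real.exp y := by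
      calc Real.exp y * (c₁ * Real.exp (x - y) + c₂)
          = c₁ * (Real.exp y * Real.exp (x - y)) + c₂ * Real.exp y := by ring
        _ = c₁ * Real.exp x + c₂ * Real.exp y := by rw [hxy]
    rw [hlin]
  have hfmeas : Measurable (fun z : ℝ => ENNReal.ofReal (max (u₁ * Real.exp z + u₂) 0)) :=
    (((continuous_const.mul Real.continuous_exp).add continuous_const).max
      continuous_const).measurable.ennreal_ofReal
  have step1 : ∫⁻ ω, ENNReal.ofReal (max (u₁ * Real.exp (ξ ω 0) + u₂ * Real.exp (ξ ω 1)) 0) ∂P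
      = ∫⁻ z, ENNReal.ofReal (max (u₁ * Real.exp z + u₂) 0) ∂ν := by
    rw [hν_int _ hfmeas]
    refine (lintegral_congr fun ω => ?_).symm
    exact payoff u₁ u₂ (ξ ω 0) (ξ ω 1)
  have step2 : ∫⁻ ω, ENNReal.ofReal (max (u₁ * Real.exp (ξ ω 1) + u₂ * Real.exp (ξ ω 0)) 0) ∂P
      = ∫⁻ z, ENNReal.ofReal (max (u₁ * Real.exp z + u₂) 0) ∂ν' := by
    rw [hν'_int _ hfmeas]
    refine (lintegral_congr fun ω => ?_).symm
    exact payoff u₁ u₂ (ξ ω 1) (ξ ω 0)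
  have hmeas1 : AEMeasurable (fun ω => max (u₁ * Real.exp (ξ ω 0) + u₂ * Real.exp (ξ ω 1)) 0) P :=
    (((Real.measurable_exp.comp_aemeasurable hX).const_mul u₁).add
      ((Real.measurable_exp.comp_aemeasurable hY).const_mul u₂)).max aemeasurable_const
  have hmeas2 : AEMeasurable (fun ω => max (u₁ * Real.exp (ξ ω 1) + u₂ * Real.exp (ξ ω 0)) 0) P :=
    (((Real.measurable_exp.comp_aemeasurable hY).const_mul u₁).add
      ((Real.measurable_exp.comp_aemeasurable hX).const_mul u₂)).max aemeasurable_const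
  have e1 : ∫ ω, max (u₁ * Real.exp (ξ ω 0) + u₂ * Real.exp (ξ ω 1)) 0 ∂P
      = ENNReal.toReal (∫⁻ ω, ENNReal.ofReal
          (max (u₁ * Real.exp (ξ ω 0) + u₂ * Real.exp (ξ ω 1)) 0) ∂P) :=
    integral_eq_lintegral_of_nonneg_ae (Filter.Eventually.of_forall fun ω => le_max_right _ _)
      hmeas1.aestronglyMeasurable
  have e2 : ∫ ω, max (u₁ * Real.exp (ξ ω 1) + u₂ * Real.exp (ξ ω 0)) 0 ∂P
      = ENNReal.toReal (∫⁻ ω, ENNReal.ofReal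
          (max (u₁ * Real.exp (ξ ω 1) + u₂ * Real.exp (ξ ω 0)) 0) ∂P) :=
    integral_eq_lintegral_of_nonneg_ae (Filter.Eventually.of_forall fun ω => le_max_right _ _)
      hmeas2.aestronglyMeasurable
  rw [e1, e2, step1, step2, hνν']
end
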